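/- arXiv:2111.10950 — 4 statements merged into one kernel-verified Lean document; each statement's English description precedes it below -/
import Mathlib

section
/- Let α be a finite positive measure on [0,1). Then sup_{θ ∈ [0,2π)} |∫₀¹ sin θ / ((r − cos θ)² + sin²θ) α(dr)| < ∞ holds if and only if sup_{0<δ<1} α([1−δ,1))/δ < ∞. -/
open MeasureTheory Set
open scoped Real

lemma key_ineq (θ r : ℝ) (hr0 : 0 ≤ r) : 1 - r ≤ |r - Real.cos θ| + |Real.sin θ| := by
  have hpyth := Real.sin_sq_add_cos_sq θ
  have hs1 : |Real.sin θ| ≤ 1 := Real.abs_sin_le_one θ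
  have hs2 : Real.sin θ ^ 2 = |Real.sin θ| ^ 2 := (sq_abs _).symm
  rcases le_or_gt 0 (Real.cos θ) with h | h
  · have hc1 : Real.cos θ ≤ 1 := Real.cos_le_one θ
    have h1 : 1 - Real.cos θ ≤ |Real.sin θ| := by
      nlinarith [mul_nonneg h (by linarith : (0:ℝ) ≤ 1 - Real.cos θ),
        mul_nonneg (abs_nonneg (Real.sin θ)) (by linarith : (0:ℝ) ≤ 1 - |Real.sin θ|)]
    have h2 : Real.cos θ - r ≤ |r - Real.cos θ| := by
      rw [abs_sub_comm]; exact le_abs_self _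
    linarith
  · have h1 : -Real.cos θ ≤ |r - Real.cos θ| := by
      have h2 : -Real.cos θ ≤ r - Real.cos θ := by linarith
      exact h2.trans (le_abs_self _)
    have hc : |Real.cos θ| ≤ 1 := Real.abs_cos_le_one θ
    have hc2 : Real.cos θ ^ 2 = |Real.cos θ| ^ 2 := (sq_abs _).symm
    have h3 : (1:ℝ) ≤ |Real.cos θ| + |Real.sin θ| := by
      nlinarith [mul_nonneg (abs_nonneg (Real.cos θ)) (by linarith : (0:ℝ) ≤ 1 - |Real.cos θ|),
        mul_nonneg (abs_nonneg (Real.sin θ)) (by linarith : (0:ℝ) ≤ 1 - |Real.sin θ|)]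
    have habs : |Real.cos θ| = -Real.cos θ := abs_of_neg h
    linarith

set_option maxHeartbeats 1000000 in
lemma bwd (α : Measure ℝ) [IsFiniteMeasure α] (hα : α (Set.Ico (0:ℝ) 1)ᶜ = 0)
    (C : ℝ) (hC : ∀ δ ∈ Set.Ioo (0:ℝ) 1, (α (Set.Ico (1 - δ) 1)).toReal ≤ C * δ) :
    ∃ B : ℝ, ∀ θ ∈ Set.Ico (0:ℝ) (2 * π),
        |∫ r, Real.sin θ / ((r - Real.cos θ) ^ 2 + Real.sin θ ^ 2) ∂α| ≤ B := by
  set A := (α Set.univ).toReal with hA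
  have hA0 : 0 ≤ A := ENNReal.toReal_nonneg
  set C' := max C 0 with hC'def
  have hC'0 : 0 ≤ C' := le_max_right _ _
  have hC' : ∀ δ ∈ Set.Ioo (0:ℝ) 1, (α (Set.Ico (1 - δ) 1)).toReal ≤ C' * δ := fun δ hδ =>
    (hC δ hδ).trans (mul_le_mul_of_nonneg_right (le_max_left _ _) hδ.1.le)
  refine ⟨4 * A + 4 * π * C', fun θ _ => ?_⟩
  have hπ := Real.pi_pos
  by_cases hs0 : Real.sin θ = 0
  · simp only [hs0, zero_div, integral_zero, abs_zero]
    nlinarith [mul_nonneg hπ.le hC'0]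
  -- main case
  set s := |Real.sin θ| with hsdef
  have hs : 0 < s := abs_pos.mpr hs0
  have hs1 : s ≤ 1 := Real.abs_sin_le_one θ
  have hsq : Real.sin θ ^ 2 = s ^ 2 := (sq_abs _).symm
  set c := Real.cos θ with hcdef
  have hden : ∀ r : ℝ, 0 < (r - c) ^ 2 + Real.sin θ ^ 2 := by
    intro r; rw [hsq]; nlinarith [sq_nonneg (r - c)]
  set K : ℝ → ℝ := fun r => Real.sin θ / ((r - c) ^ 2 + Real.sin θ ^ 2) with hK
  have hKcont : Continuous K :=
    Continuous.div (by fun_prop) (by fun_prop) (fun r => (hden r).ne')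
  have hKbdd : ∀ r, ‖K r‖ ≤ 1 / s := by
    intro r
    rw [Real.norm_eq_abs, hK]
    simp only
    rw [abs_div, abs_of_pos (hden r), div_le_div_iff₀ (hden r) hs]
    rw [hsq]
    nlinarith [sq_nonneg (r - c), abs_nonneg (Real.sin θ)]
  have hKint : Integrable K α :=
    Integrable.mono' (integrable_const (1/s)) hKcont.aestronglyMeasurable
      (Filter.Eventually.of_forall hKbdd)
  have hGden : ∀ u : ℝ, 0 < (1 - u) ^ 2 + s ^ 2 := fun u => by nlinarith [sq_nonneg (1 - u)]
  set G : ℝ → ℝ := fun u => s / ((1 - u) ^ 2 + s ^ 2) with hG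
  have hGcont : Continuous G :=
    Continuous.div (by fun_prop) (by fun_prop) (fun u => (hGden u).ne')
  have hGnonneg : ∀ u, 0 ≤ G u := fun u => div_nonneg hs.le (hGden u).le
  have hGbdd : ∀ u, ‖G u‖ ≤ 1 / s := by
    intro u
    rw [Real.norm_eq_abs, abs_of_nonneg (hGnonneg u), hG]
    simp only
    rw [div_le_div_iff₀ (hGden u) hs]
    nlinarith [sq_nonneg (1 - u)]
  have hGint : Integrable G α :=
    Integrable.mono' (integrable_const (1/s)) hGcont.aestronglyMeasurable
      (Filter.Eventually.of_forall hGbdd)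
  have hae : ∀ᵐ r ∂α, r ∈ Set.Ico (0:ℝ) 1 := by
    rw [MeasureTheory.ae_iff]
    convert hα using 2
    rfl
  -- pointwise bound |K| ≤ 4G on [0,1)
  have hKabs : ∀ r, |K r| = s / ((r - c) ^ 2 + s ^ 2) := by
    intro r
    rw [hK]
    simp only
    rw [abs_div, abs_of_pos (hden r), hsq]
  have hpt : ∀ r ∈ Set.Ico (0:ℝ) 1, |K r| ≤ 4 * G r := by
    intro r hr
    have hkey : 1 - r ≤ |r - c| + s := key_ineq θ r hr.1
    have hd1 : 0 < (r - c) ^ 2 + s ^ 2 := by rw [← hsq]; exact hden r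
    have h2 : (1 - r) ^ 2 ≤ 2 * (r - c) ^ 2 + 2 * s ^ 2 := by
      have h0 : (1 - r) ^ 2 ≤ (|r - c| + s) ^ 2 := by
        have := mul_self_le_mul_self (by linarith [hr.2] : (0:ℝ) ≤ 1 - r) hkey
        nlinarith [this]
      nlinarith [sq_abs (r - c), sq_nonneg (|r - c| - s), h0]
    rw [hKabs r, hG]
    simp only
    rw [mul_div_assoc', div_le_div_iff₀ hd1 (hGden r)]
    nlinarith [mul_le_mul_of_nonneg_left h2 hs.le, sq_nonneg (r - c)]
  have hmono : ∫ r, |K r| ∂α ≤ ∫ r, 4 * G r ∂α :=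
    integral_mono_ae hKint.abs (hGint.const_mul 4) (hae.mono hpt)
  have habs : |∫ r, K r ∂α| ≤ ∫ r, |K r| ∂α := by
    simpa [Real.norm_eq_abs] using norm_integral_le_integral_norm (μ := α) K
  rw [integral_const_mul] at hmono
  -- the derivative g of G
  set g : ℝ → ℝ := fun u => 2 * s * (1 - u) / (((1 - u) ^ 2 + s ^ 2) ^ 2) with hgdef
  have hg : ∀ u : ℝ, HasDerivAt G (g u) u := by
    intro u
    have h0 : HasDerivAt (fun x : ℝ => 1 - x) (-1) u := by
      simpa using (hasDerivAt_id u).const_sub 1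
    have h1 : HasDerivAt (fun x : ℝ => (1 - x) ^ 2 + s ^ 2) (2 * (1 - u) ^ 1 * (-1)) u :=
      (h0.pow 2).add_const (s ^ 2)
    have h2 := (hasDerivAt_const u s).div h1 (hGden u).ne'
    refine h2.congr_deriv (Eq.symm ?_)
    rw [hgdef]
    simp only
    field_simp
    ring
  have hgcont : Continuous g := by
    apply Continuous.div (by fun_prop) (by fun_prop)
    intro u
    exact pow_ne_zero 2 (hGden u).ne'
  have hgbdd : ∀ u, ‖g u‖ ≤ 1 / s ^ 2 := by
    intro u
    have hD := hGden u
    rw [Real.norm_eq_abs, hgdef]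
    simp only
    rw [abs_div, abs_of_pos (by positivity : (0:ℝ) < ((1 - u) ^ 2 + s ^ 2) ^ 2)]
    have habs2 : |2 * s * (1 - u)| = 2 * s * |1 - u| := by
      rw [abs_mul, abs_of_nonneg (by positivity : (0:ℝ) ≤ 2 * s)]
    rw [habs2, div_le_div_iff₀ (by positivity) (by positivity : (0:ℝ) < s ^ 2)]
    have e1 : 2 * s * |1 - u| ≤ (1 - u) ^ 2 + s ^ 2 := by
      nlinarith [sq_nonneg (|1 - u| - s), sq_abs (1 - u)]
    have e2 : s ^ 2 ≤ (1 - u) ^ 2 + s ^ 2 := by nlinarith [sq_nonneg (1 - u)]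
    nlinarith [mul_le_mul e1 e2 (by positivity) hD.le]
  -- FTC
  have hFTC : ∀ r ∈ Set.Ico (0:ℝ) 1, G r - G 0 = ∫ u in (0:ℝ)..r, g u := by
    intro r hr
    exact (intervalIntegral.integral_eq_sub_of_hasDerivAt (fun u _ => hg u)
      (hgcont.intervalIntegrable 0 r)).symm
  set ν := volume.restrict (Set.Ioo (0:ℝ) 1) with hν
  haveI hνfin : IsFiniteMeasure ν := by
    constructor
    rw [hν, Measure.restrict_apply_univ]
    exact measure_Ioo_lt_top
  set F : ℝ → ℝ → ℝ := fun r u => Set.indicator (Set.Ioc 0 r) g u with hF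
  have hFint : Integrable (Function.uncurry F) (α.prod ν) := by
    have hSmeas : MeasurableSet {p : ℝ × ℝ | p.2 ∈ Set.Ioc 0 p.1} := by
      have h1 : {p : ℝ × ℝ | p.2 ∈ Set.Ioc 0 p.1}
          = {p : ℝ × ℝ | 0 < p.2} ∩ {p : ℝ × ℝ | p.2 ≤ p.1} := by
        ext p; simp [Set.mem_Ioc]
      rw [h1]
      exact (measurableSet_lt measurable_const measurable_snd).inter
        (measurableSet_le measurable_snd measurable_fst)
    have hmeas : Measurable (Function.uncurry F) := by
      have h2 : Function.uncurry F
          = Set.indicator {p : ℝ × ℝ | p.2 ∈ Set.Ioc 0 p.1} (fun p => g p.2) := by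
        ext p
        simp only [Function.uncurry, hF, Set.indicator, Set.mem_setOf_eq]
        split <;> rfl
      rw [h2]
      exact (hgcont.measurable.comp measurable_snd).indicator hSmeas
    refine Integrable.mono' (integrable_const (1 / s ^ 2)) hmeas.aestronglyMeasurable ?_
    refine Filter.Eventually.of_forall fun p => ?_
    calc ‖Function.uncurry F p‖ ≤ ‖g p.2‖ := norm_indicator_le_norm_self g p.2
      _ ≤ 1 / s ^ 2 := hgbdd p.2
  set H : ℝ → ℝ := fun r => ∫ u, F r u ∂ν with hH
  have hGH : ∀ᵐ r ∂α, G r = G 0 + H r := by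
    refine hae.mono fun r hr => ?_
    have h1 := hFTC r hr
    have h2 : ∫ u in (0:ℝ)..r, g u = H r := by
      rw [intervalIntegral.integral_of_le hr.1, hH]
      simp only
      rw [hF]
      simp only
      rw [integral_indicator measurableSet_Ioc, hν,
        Measure.restrict_restrict measurableSet_Ioc]
      congr 1
      rw [Set.inter_eq_self_of_subset_left]
      exact fun x hx => ⟨hx.1, lt_of_le_of_lt hx.2 hr.2⟩
    linarith
  have hHint : Integrable H α := by
    have h1 : Integrable (fun r => G r - G 0) α := hGint.sub (integrable_const (G 0))
    exact h1.congr (hGH.mono fun r h => by dsimp only; linarith)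
  have hsplit : ∫ r, G r ∂α = G 0 * A + ∫ r, H r ∂α := by
    rw [integral_congr_ae hGH, integral_add (integrable_const _) hHint, integral_const,
      smul_eq_mul, hA, mul_comm]
    rfl
  -- swap
  have hswap : ∫ r, H r ∂α = ∫ u, (∫ r, F r u ∂α) ∂ν := integral_integral_swap hFint
  -- inner evaluation
  have hinner : ∀ᵐ u ∂ν, (∫ r, F r u ∂α) = (α (Set.Ici u)).toReal * g u := by
    refine (ae_restrict_mem measurableSet_Ioo).mono fun u hu => ?_
    have h3 : (fun r => F r u) = Set.indicator (Set.Ici u) (fun _ => g u) := by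
      funext r
      rw [hF]
      simp only
      by_cases hur : u ≤ r
      · rw [Set.indicator_of_mem (Set.mem_Ioc.mpr ⟨hu.1, hur⟩),
          Set.indicator_of_mem (Set.mem_Ici.mpr hur)]
      · rw [Set.indicator_of_notMem (fun hmem => hur (Set.mem_Ioc.mp hmem).2),
          Set.indicator_of_notMem (fun hmem => hur (Set.mem_Ici.mp hmem))]
    rw [h3, integral_indicator_const _ measurableSet_Ici, smul_eq_mul]
    rfl
  -- comparison
  set φ₂ : ℝ → ℝ := fun u => 2 * C' * G u with hφ₂
  have hGintν : Integrable G ν :=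
    Integrable.mono' (integrable_const (1/s)) hGcont.aestronglyMeasurable
      (Filter.Eventually.of_forall hGbdd)
  have hφ₂int : Integrable φ₂ ν := hGintν.const_mul _
  have hanti : Antitone (fun u : ℝ => (α (Set.Ici u)).toReal) := by
    intro u v huv
    exact ENNReal.toReal_mono (measure_ne_top α _)
      (measure_mono (Set.Ici_subset_Ici.mpr huv))
  have hφ₁int : Integrable (fun u => (α (Set.Ici u)).toReal * g u) ν := by
    refine Integrable.mono' (integrable_const (A * (1 / s ^ 2)))
      ((hanti.measurable.mul hgcont.measurable).aestronglyMeasurable)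
      (Filter.Eventually.of_forall fun u => ?_)
    rw [Real.norm_eq_abs, abs_mul, abs_of_nonneg ENNReal.toReal_nonneg]
    have h4 : (α (Set.Ici u)).toReal ≤ A :=
      ENNReal.toReal_mono (measure_ne_top α _) (measure_mono (Set.subset_univ _))
    have h5 : |g u| ≤ 1 / s ^ 2 := by rw [← Real.norm_eq_abs]; exact hgbdd u
    exact mul_le_mul h4 h5 (abs_nonneg _) hA0
  have hcompare : ∀ᵐ u ∂ν, (α (Set.Ici u)).toReal * g u ≤ φ₂ u := by
    refine (ae_restrict_mem measurableSet_Ioo).mono fun u hu => ?_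
    have hD := hGden u
    have hIci : (α (Set.Ici u)).toReal ≤ C' * (1 - u) := by
      have hsub : Set.Ici u ⊆ Set.Ico u 1 ∪ (Set.Ico (0:ℝ) 1)ᶜ := by
        intro x hx
        by_cases hx1 : x ∈ Set.Ico (0:ℝ) 1
        · exact Or.inl ⟨hx, hx1.2⟩
        · exact Or.inr hx1
      have h6 : α (Set.Ici u) ≤ α (Set.Ico u 1) := by
        calc α (Set.Ici u) ≤ α (Set.Ico u 1 ∪ (Set.Ico (0:ℝ) 1)ᶜ) := measure_mono hsub
          _ ≤ α (Set.Ico u 1) + α (Set.Ico (0:ℝ) 1)ᶜ := measure_union_le _ _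
          _ = α (Set.Ico u 1) := by rw [hα, add_zero]
      have h7 := hC' (1 - u) ⟨by linarith [hu.2], by linarith [hu.1]⟩
      have h8 : (1:ℝ) - (1 - u) = u := by ring
      rw [h8] at h7
      exact le_trans (ENNReal.toReal_mono (measure_ne_top α _) h6) h7
    have hgnn : 0 ≤ g u := by
      rw [hgdef]
      have : (0:ℝ) ≤ 1 - u := by linarith [hu.2]
      positivity
    have e1 : (1 - u) * g u ≤ 2 * G u := by
      rw [hgdef, hG]
      simp only
      rw [mul_div_assoc', mul_div_assoc', div_le_div_iff₀ (by positivity) hD]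
      nlinarith [sq_nonneg (1 - u), sq_nonneg s, hD, mul_le_mul_of_nonneg_left
        (by nlinarith [sq_nonneg (1-u)] : (1-u)^2 ≤ (1-u)^2 + s^2)
        (by positivity : (0:ℝ) ≤ 2 * s * ((1-u)^2 + s^2))]
    calc (α (Set.Ici u)).toReal * g u ≤ (C' * (1 - u)) * g u :=
          mul_le_mul_of_nonneg_right hIci hgnn
      _ = C' * ((1 - u) * g u) := by ring
      _ ≤ C' * (2 * G u) := mul_le_mul_of_nonneg_left e1 hC'0
      _ = φ₂ u := by rw [hφ₂]; ring
  have hmono2 : ∫ u, (∫ r, F r u ∂α) ∂ν ≤ ∫ u, φ₂ u ∂ν := by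
    rw [integral_congr_ae hinner]
    exact integral_mono_ae hφ₁int hφ₂int hcompare
  -- evaluate ∫ φ₂ dν
  have hΦ : ∀ u : ℝ, HasDerivAt (fun x => -Real.arctan ((1 - x) / s)) (G u) u := by
    intro u
    have h0 : HasDerivAt (fun x : ℝ => (1 - x) / s) (-1 / s) u := by
      have h00 : HasDerivAt (fun x : ℝ => 1 - x) (-1) u := by
        simpa using (hasDerivAt_id u).const_sub 1
      exact h00.div_const s
    have h1 := (Real.hasDerivAt_arctan ((1 - u) / s)).comp u h0
    have h2 := h1.neg
    refine h2.congr_deriv (Eq.symm ?_)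
    rw [hG]
    simp only [Function.comp]
    field_simp
    ring
  have hGν : ∫ u, G u ∂ν ≤ π / 2 := by
    have h9 : ∫ u in (0:ℝ)..1, G u
        = (fun x => -Real.arctan ((1 - x) / s)) 1 - (fun x => -Real.arctan ((1 - x) / s)) 0 :=
      intervalIntegral.integral_eq_sub_of_hasDerivAt (fun u _ => hΦ u)
        (hGcont.intervalIntegrable 0 1)
    have h10 : ∫ u, G u ∂ν = ∫ u in (0:ℝ)..1, G u := by
      rw [intervalIntegral.integral_of_le zero_le_one, hν,
        integral_Ioc_eq_integral_Ioo]
    rw [h10, h9]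
    simp only
    have hz : Real.arctan ((1 - (1:ℝ)) / s) = 0 := by norm_num
    linarith [Real.arctan_lt_pi_div_two ((1 - (0:ℝ)) / s)]
  have hφ₂ν : ∫ u, φ₂ u ∂ν ≤ π * C' := by
    have : ∫ u, φ₂ u ∂ν = 2 * C' * ∫ u, G u ∂ν := by
      rw [hφ₂]
      exact integral_const_mul _ _
    rw [this]
    calc 2 * C' * ∫ u, G u ∂ν ≤ 2 * C' * (π / 2) :=
          mul_le_mul_of_nonneg_left hGν (by positivity)
      _ = π * C' := by ring
  -- assemble
  have hG0 : G 0 ≤ 1 := by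
    rw [hG]
    simp only
    rw [div_le_one (hGden 0)]
    nlinarith [sq_nonneg (1 - s)]
  have hGα : ∫ r, G r ∂α ≤ A + π * C' := by
    rw [hsplit, hswap]
    have hG0A : G 0 * A ≤ A := by
      nlinarith [mul_le_mul_of_nonneg_right hG0 hA0]
    linarith [hmono2.trans hφ₂ν]
  calc |∫ r, K r ∂α| ≤ ∫ r, |K r| ∂α := habs
    _ ≤ 4 * ∫ a, G a ∂α := hmono
    _ ≤ 4 * (A + π * C') := by linarith [hGα]
    _ = 4 * A + 4 * π * C' := by ring


lemma fwd (α : Measure ℝ) [IsFiniteMeasure α] (hα : α (Set.Ico (0:ℝ) 1)ᶜ = 0)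
    (B : ℝ) (hB : ∀ θ ∈ Set.Ico (0:ℝ) (2 * π),
        |∫ r, Real.sin θ / ((r - Real.cos θ) ^ 2 + Real.sin θ ^ 2) ∂α| ≤ B) :
    ∃ B : ℝ, ∀ δ ∈ Set.Ioo (0:ℝ) 1, (α (Set.Ico (1 - δ) 1)).toReal ≤ B * δ := by
  refine ⟨2 * B, fun δ hδ => ?_⟩
  obtain ⟨hδ0, hδ1⟩ := hδ
  set θ := Real.arcsin δ with hθdef
  have hδ1' : δ ≤ 1 := hδ1.le
  have hδm1 : (-1:ℝ) ≤ δ := by linarith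
  have hsin : Real.sin θ = δ := Real.sin_arcsin hδm1 hδ1'
  have hcos : Real.cos θ = Real.sqrt (1 - δ ^ 2) := Real.cos_arcsin δ
  have hθmem : θ ∈ Set.Ico (0:ℝ) (2 * π) := by
    constructor
    · exact Real.arcsin_nonneg.2 hδ0.le
    · have h1 : θ ≤ π / 2 := Real.arcsin_le_pi_div_two δ
      have := Real.pi_gt_three
      linarith
  have hbound := hB θ hθmem
  set K : ℝ → ℝ := fun r => Real.sin θ / ((r - Real.cos θ) ^ 2 + Real.sin θ ^ 2) with hK
  have hden : ∀ r : ℝ, (0:ℝ) < (r - Real.cos θ) ^ 2 + Real.sin θ ^ 2 := by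
    intro r
    have : (0:ℝ) < Real.sin θ ^ 2 := by rw [hsin]; positivity
    nlinarith [sq_nonneg (r - Real.cos θ)]
  have hKnonneg : ∀ r, 0 ≤ K r := fun r =>
    div_nonneg (by rw [hsin]; linarith) (hden r).le
  have hKcont : Continuous K := by
    apply Continuous.div (by fun_prop) (by fun_prop)
    intro r; exact (hden r).ne'
  have hKbdd : ∀ r, ‖K r‖ ≤ 1 / δ := by
    intro r
    rw [Real.norm_eq_abs, abs_of_nonneg (hKnonneg r)]
    rw [hK]
    simp only
    rw [div_le_div_iff₀ (hden r) (by positivity)]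
    rw [hsin]
    nlinarith [sq_nonneg (r - Real.cos θ)]
  have hKint : Integrable K α := by
    refine Integrable.mono' (integrable_const (1/δ)) hKcont.aestronglyMeasurable ?_
    exact Filter.Eventually.of_forall hKbdd
  -- cos θ bounds
  have hc1 : Real.cos θ ≤ 1 := Real.cos_le_one θ
  have hc2 : 1 - δ ≤ Real.cos θ := by
    rw [hcos]
    have h : (1 - δ) ^ 2 ≤ 1 - δ ^ 2 := by nlinarith
    calc 1 - δ = Real.sqrt ((1-δ)^2) := by rw [Real.sqrt_sq (by linarith)]
    _ ≤ Real.sqrt (1 - δ ^ 2) := Real.sqrt_le_sqrt h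
  have hKlow : ∀ r ∈ Set.Ico (1 - δ) 1, 1 / (2 * δ) ≤ K r := by
    intro r hr
    obtain ⟨hr1, hr2⟩ := hr
    rw [hK]; simp only
    rw [hsin]
    have hd2 : (0:ℝ) < (r - Real.cos θ) ^ 2 + δ ^ 2 := by
      nlinarith [sq_nonneg (r - Real.cos θ)]
    rw [div_le_div_iff₀ (by positivity) hd2]
    have h1 : r - Real.cos θ ≤ δ := by linarith
    have h2 : Real.cos θ - r ≤ δ := by linarith
    nlinarith [sq_nonneg (r - Real.cos θ)]
  have hset : MeasurableSet (Set.Ico (1 - δ) 1) := measurableSet_Ico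
  have hμfin : α (Set.Ico (1 - δ) 1) ≠ ⊤ := (measure_lt_top α _).ne
  have hlow := setIntegral_ge_of_const_le_real (c := 1 / (2 * δ)) hset hμfin hKlow
    (hKint.integrableOn)
  have hle : ∫ r in Set.Ico (1 - δ) 1, K r ∂α ≤ ∫ r, K r ∂α :=
    setIntegral_le_integral hKint (Filter.Eventually.of_forall hKnonneg)
  have hB' : ∫ r, K r ∂α ≤ B := (le_abs_self _).trans hbound
  have hfinal : 1 / (2 * δ) * (α (Set.Ico (1 - δ) 1)).toReal ≤ B := by
    calc 1 / (2 * δ) * (α (Set.Ico (1 - δ) 1)).toReal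
        ≤ ∫ r in Set.Ico (1 - δ) 1, K r ∂α := hlow
      _ ≤ ∫ r, K r ∂α := hle
      _ ≤ B := hB'
  rw [div_mul_eq_mul_div, one_mul, div_le_iff₀ (by positivity)] at hfinal
  linarith

/-- for a finite measure α on [0,1),
`sup_θ |∫₀¹ sinθ/((r-cosθ)²+sin²θ) α(dr)| < ∞` iff `sup_{0<δ<1} α([1-δ,1))/δ < ∞`. -/
theorem stmt2 (α : Measure ℝ) [IsFiniteMeasure α] (hα : α (Set.Ico (0:ℝ) 1)ᶜ = 0) :
    (∃ B : ℝ, ∀ θ ∈ Set.Ico (0:ℝ) (2 * π),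
        |∫ r, Real.sin θ / ((r - Real.cos θ) ^ 2 + Real.sin θ ^ 2) ∂α| ≤ B) ↔
    ∃ B : ℝ, ∀ δ ∈ Set.Ioo (0:ℝ) 1, (α (Set.Ico (1 - δ) 1)).toReal ≤ B * δ := by
  constructor
  · rintro ⟨B, hB⟩
    exact fwd α hα B hB
  · rintro ⟨B, hB⟩
    exact bwd α hα B hB
end

section
/- Let ν be a positive measure on ℝ with ∫_ℝ (1+t²)^{-1} ν(dt) < ∞. Then sup_{y>0} ∫_ℝ y/(t²+y²) ν(dt) < ∞ if and only if sup_{L>0} ν([−L,L])/(2L) < ∞. -/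
open MeasureTheory Set
open scoped Real ENNReal

/-- A constant lower bound on a set gives a lower bound on the lintegral. -/
lemma const_le_setLIntegral {ν : Measure ℝ} {s : Set ℝ} {f : ℝ → ℝ≥0∞} {c : ℝ≥0∞}
    (hs : MeasurableSet s) (h : ∀ t ∈ s, c ≤ f t) : c * ν s ≤ ∫⁻ t in s, f t ∂ν := by
  rw [← setLIntegral_const s c]
  exact setLIntegral_mono' hs h

/-- Garnett: for a positive measure ν on ℝ with `∫ (1+t²)⁻¹ dν < ∞`,
`sup_{y>0} ∫ y/(t²+y²) dν < ∞` iff `sup_{L>0} ν([-L,L])/(2L) < ∞`. -/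
theorem stmt3 (ν : Measure ℝ)
    (hν : ∫⁻ t, ENNReal.ofReal (1 / (1 + t ^ 2)) ∂ν < ⊤) :
    (∃ B : ℝ≥0∞, B < ⊤ ∧ ∀ y : ℝ, 0 < y →
        ∫⁻ t, ENNReal.ofReal (y / (t ^ 2 + y ^ 2)) ∂ν ≤ B) ↔
    ∃ B : ℝ, ∀ L : ℝ, 0 < L → (ν (Set.Icc (-L) L)).toReal ≤ B * (2 * L) := by
  -- Every Icc has finite measure, from hν.
  have hfin : ∀ L : ℝ, 0 < L → ν (Set.Icc (-L) L) ≠ ⊤ := by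
    intro L hL
    intro htop
    have hlow : ∀ t ∈ Set.Icc (-L) L,
        ENNReal.ofReal (1 / (1 + L ^ 2)) ≤ ENNReal.ofReal (1 / (1 + t ^ 2)) := by
      intro t ht
      apply ENNReal.ofReal_le_ofReal
      have ht2 : t ^ 2 ≤ L ^ 2 := sq_le_sq' ht.1 ht.2
      have h1 : (0:ℝ) < 1 + t ^ 2 := by positivity
      have h2 : (0:ℝ) < 1 + L ^ 2 := by positivity
      apply div_le_div_of_nonneg_left (by norm_num) h1 (by linarith)
    have hle : ENNReal.ofReal (1 / (1 + L ^ 2)) * ν (Set.Icc (-L) L) ≤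
        ∫⁻ t, ENNReal.ofReal (1 / (1 + t ^ 2)) ∂ν :=
      le_trans (const_le_setLIntegral measurableSet_Icc hlow) (setLIntegral_le_lintegral _ _)
    rw [htop] at hle
    have hc0 : ENNReal.ofReal (1 / (1 + L ^ 2)) ≠ 0 := by
      simp only [ne_eq, ENNReal.ofReal_eq_zero, not_le]
      positivity
    rw [ENNReal.mul_top hc0] at hle
    exact (lt_irrefl _ (lt_of_le_of_lt (le_trans le_top hle) hν)).elim
  constructor
  · -- forward direction
    rintro ⟨B, hBlt, hB⟩
    refine ⟨B.toReal, fun L hL => ?_⟩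
    have hlow : ∀ t ∈ Set.Icc (-L) L,
        ENNReal.ofReal (1 / (2 * L)) ≤ ENNReal.ofReal (L / (t ^ 2 + L ^ 2)) := by
      intro t ht
      apply ENNReal.ofReal_le_ofReal
      have ht2 : t ^ 2 ≤ L ^ 2 := sq_le_sq' ht.1 ht.2
      rw [div_le_div_iff₀ (by positivity) (by positivity)]
      nlinarith
    have hle : ENNReal.ofReal (1 / (2 * L)) * ν (Set.Icc (-L) L) ≤ B :=
      le_trans (le_trans (const_le_setLIntegral measurableSet_Icc hlow) (setLIntegral_le_lintegral _ _)) (hB L hL)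
    have hc : ENNReal.ofReal (1 / (2 * L)) = (ENNReal.ofReal (2 * L))⁻¹ := by
      rw [one_div, ENNReal.ofReal_inv_of_pos (by positivity)]
    rw [hc, mul_comm] at hle
    have h2L0 : ENNReal.ofReal (2 * L) ≠ 0 := by
      simp only [ne_eq, ENNReal.ofReal_eq_zero, not_le]; positivity
    have key : ν (Set.Icc (-L) L) ≤ B * ENNReal.ofReal (2 * L) := by
      rw [← ENNReal.div_le_iff_le_mul (Or.inl h2L0) (Or.inl ENNReal.ofReal_ne_top)]
      rwa [ENNReal.div_eq_inv_mul, mul_comm]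
    have hBfin : B * ENNReal.ofReal (2 * L) ≠ ⊤ :=
      ENNReal.mul_ne_top hBlt.ne ENNReal.ofReal_ne_top
    calc (ν (Set.Icc (-L) L)).toReal ≤ (B * ENNReal.ofReal (2 * L)).toReal :=
          ENNReal.toReal_mono hBfin key
      _ = B.toReal * (2 * L) := by
          rw [ENNReal.toReal_mul, ENNReal.toReal_ofReal (by positivity)]
  · -- backward direction
    rintro ⟨B, hB⟩
    set C := max B 0 with hCdef
    have hC0 : 0 ≤ C := le_max_right _ _
    have hB' : ∀ L : ℝ, 0 < L → ν (Set.Icc (-L) L) ≤ ENNReal.ofReal (C * (2 * L)) := by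
      intro L hL
      rw [ENNReal.le_ofReal_iff_toReal_le (hfin L hL) (by positivity)]
      calc (ν (Set.Icc (-L) L)).toReal ≤ B * (2 * L) := hB L hL
        _ ≤ C * (2 * L) := by
            apply mul_le_mul_of_nonneg_right (le_max_left _ _) (by positivity)
    refine ⟨ENNReal.ofReal (8 * C) * 2, by finiteness, fun y hy => ?_⟩
    -- dyadic annuli
    set A : ℕ → Set ℝ := fun k => Nat.rec (Set.Icc (-y) y)
      (fun k _ => Set.Icc (-(2 ^ (k + 1) * y)) (2 ^ (k + 1) * y) \
        Set.Icc (-(2 ^ k * y)) (2 ^ k * y)) k with hA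
    have hA0 : A 0 = Set.Icc (-y) y := rfl
    have hAs : ∀ k, A (k + 1) = Set.Icc (-(2 ^ (k + 1) * y)) (2 ^ (k + 1) * y) \
        Set.Icc (-(2 ^ k * y)) (2 ^ k * y) := fun k => rfl
    have hsub : ∀ n : ℕ, Set.Icc (-(2 ^ n * y)) (2 ^ n * y) ⊆ ⋃ k, A k := by
      intro n
      induction n with
      | zero => intro t ht
                exact Set.mem_iUnion.2 ⟨0, by simpa [hA0] using ht⟩
      | succ n ih =>
          intro t ht
          by_cases h : t ∈ Set.Icc (-(2 ^ n * y)) (2 ^ n * y)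
          · exact ih h
          · exact Set.mem_iUnion.2 ⟨n + 1, by rw [hAs n]; exact ⟨ht, h⟩⟩
    have hcover : (⋃ k, A k) = Set.univ := by
      apply Set.eq_univ_of_forall
      intro t
      obtain ⟨n, hn⟩ := pow_unbounded_of_one_lt (|t| / y) (by norm_num : (1:ℝ) < 2)
      apply hsub n
      have : |t| ≤ 2 ^ n * y := by
        rw [div_lt_iff₀ hy] at hn
        linarith
      constructor
      · linarith [neg_abs_le t]
      · linarith [le_abs_self t]
    have hpiece : ∀ k : ℕ, ∫⁻ t in A k, ENNReal.ofReal (y / (t ^ 2 + y ^ 2)) ∂ν ≤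
        ENNReal.ofReal (8 * C) * 2⁻¹ ^ k := by
      intro k
      cases k with
      | zero =>
          have hub : ∀ t ∈ A 0, ENNReal.ofReal (y / (t ^ 2 + y ^ 2)) ≤
              ENNReal.ofReal (1 / y) := by
            intro t _
            apply ENNReal.ofReal_le_ofReal
            rw [div_le_div_iff₀ (by positivity) hy]
            nlinarith
          calc ∫⁻ t in A 0, ENNReal.ofReal (y / (t ^ 2 + y ^ 2)) ∂ν
              ≤ ∫⁻ _ in A 0, ENNReal.ofReal (1 / y) ∂ν :=
                setLIntegral_mono measurable_const hub
            _ = ENNReal.ofReal (1 / y) * ν (A 0) := setLIntegral_const _ _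
            _ ≤ ENNReal.ofReal (1 / y) * ENNReal.ofReal (C * (2 * y)) := by
                rw [hA0]; exact mul_le_mul_right (hB' y hy) _
            _ = ENNReal.ofReal (1 / y * (C * (2 * y))) :=
                (ENNReal.ofReal_mul (by positivity)).symm
            _ ≤ ENNReal.ofReal (8 * C) * 2⁻¹ ^ 0 := by
                rw [pow_zero, mul_one]
                apply ENNReal.ofReal_le_ofReal
                rw [one_div, inv_mul_eq_div, mul_comm C, mul_assoc, mul_div_assoc,
                  mul_div_cancel_left₀ _ (ne_of_gt hy)]
                nlinarith
      | succ k =>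
          have hub : ∀ t ∈ A (k + 1), ENNReal.ofReal (y / (t ^ 2 + y ^ 2)) ≤
              ENNReal.ofReal (y / (2 ^ k * y) ^ 2) := by
            intro t ht
            rw [hAs k] at ht
            have ht2 : (2 ^ k * y) ^ 2 ≤ t ^ 2 := by
              have hnot := ht.2
              rw [Set.mem_Icc, not_and_or, not_le, not_le] at hnot
              have h2k : (0:ℝ) < 2 ^ k * y := by positivity
              rcases hnot with h | h
              · nlinarith [sq_nonneg (t + 2 ^ k * y)]
              · nlinarith [sq_nonneg (t - 2 ^ k * y)]
            apply ENNReal.ofReal_le_ofReal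
            have h2k : (0:ℝ) < 2 ^ k * y := by positivity
            rw [div_le_div_iff₀ (by positivity) (by positivity)]
            nlinarith
          have hmeas : ν (A (k + 1)) ≤ ENNReal.ofReal (C * (2 * (2 ^ (k + 1) * y))) := by
            refine le_trans (measure_mono ?_) (hB' (2 ^ (k + 1) * y) (by positivity))
            rw [hAs k]; exact Set.diff_subset
          calc ∫⁻ t in A (k + 1), ENNReal.ofReal (y / (t ^ 2 + y ^ 2)) ∂ν
              ≤ ∫⁻ _ in A (k + 1), ENNReal.ofReal (y / (2 ^ k * y) ^ 2) ∂ν :=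
                setLIntegral_mono measurable_const hub
            _ = ENNReal.ofReal (y / (2 ^ k * y) ^ 2) * ν (A (k + 1)) := setLIntegral_const _ _
            _ ≤ ENNReal.ofReal (y / (2 ^ k * y) ^ 2) *
                ENNReal.ofReal (C * (2 * (2 ^ (k + 1) * y))) := mul_le_mul_right hmeas _
            _ = ENNReal.ofReal (y / (2 ^ k * y) ^ 2 * (C * (2 * (2 ^ (k + 1) * y)))) :=
                (ENNReal.ofReal_mul (by positivity)).symm
            _ = ENNReal.ofReal (8 * C * (1 / 2) ^ (k + 1)) := by
                congr 1
                have hy' : y ≠ 0 := ne_of_gt hy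
                have h2 : (2:ℝ) ^ k ≠ 0 := by positivity
                rw [one_div_pow]
                field_simp
                ring
            _ = ENNReal.ofReal (8 * C) * 2⁻¹ ^ (k + 1) := by
                rw [ENNReal.ofReal_mul (by positivity), ENNReal.ofReal_pow (by norm_num),
                  one_div, ENNReal.ofReal_inv_of_pos (by norm_num), ENNReal.ofReal_ofNat]
    calc ∫⁻ t, ENNReal.ofReal (y / (t ^ 2 + y ^ 2)) ∂ν
        = ∫⁻ t in ⋃ k, A k, ENNReal.ofReal (y / (t ^ 2 + y ^ 2)) ∂ν := by
          rw [hcover, Measure.restrict_univ]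
      _ ≤ ∑' k, ∫⁻ t in A k, ENNReal.ofReal (y / (t ^ 2 + y ^ 2)) ∂ν :=
          lintegral_iUnion_le _ _
      _ ≤ ∑' k : ℕ, ENNReal.ofReal (8 * C) * 2⁻¹ ^ k := ENNReal.tsum_le_tsum hpiece
      _ = ENNReal.ofReal (8 * C) * 2 := by
          rw [ENNReal.tsum_mul_left, ENNReal.tsum_geometric]
          congr 1
          rw [show (1:ℝ≥0∞) - 2⁻¹ = 2⁻¹ by
            rw [ENNReal.sub_eq_of_eq_add (by norm_num)]; rw [ENNReal.inv_two_add_inv_two]]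
          simp
end

section
/- Let Π be a positive Radon measure on (0,∞) with Π((0,y]) ≤ Cy for all y > 0. Then for every ε > 0 and x ∈ ℝ, ∫_{(0,ε]} π|x|/(y² + π²x²) Π(dy) ≤ C·arctan(ε/(π|x|)). Consequently, for every φ ∈ L¹(ℝ), lim_{ε→0⁺} ∫_ℝ φ(x) [∫_{(0,ε]} πx/(y²+π²x²) Π(dy)] dx = 0. -/
open MeasureTheory Set Filter
open scoped Real ENNReal Topology


lemma aux1 (P : Measure ℝ) [IsLocallyFiniteMeasure P] (C a ε : ℝ) (ha : 0 < a) (hε : 0 < ε)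
    (hC : ∀ y : ℝ, 0 < y → (P (Set.Ioc 0 y)).toReal ≤ C * y) :
    ∫⁻ y in Set.Ioc 0 ε, ENNReal.ofReal (a / (y ^ 2 + a ^ 2)) ∂P
      ≤ ENNReal.ofReal (C * Real.arctan (ε / a)) := by
  have hC0 : 0 ≤ C := by
    have h1 := hC 1 one_pos
    have := ENNReal.toReal_nonneg (a := P (Set.Ioc 0 1))
    linarith
  have hfin : ∀ y : ℝ, 0 < y → P (Set.Ioc 0 y) ≤ ENNReal.ofReal (C * y) := by
    intro y hy
    have h1 : P (Set.Ioc 0 y) ≠ ∞ :=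
      (lt_of_le_of_lt (measure_mono Set.Ioc_subset_Icc_self) isCompact_Icc.measure_lt_top).ne
    rw [ENNReal.le_ofReal_iff_toReal_le h1 (by positivity)]
    exact hC y hy
  set f : ℝ → ℝ := fun y => a / (y ^ 2 + a ^ 2) with hf
  have hfc : Continuous f :=
    continuous_const.div (by continuity) (fun y => by positivity)
  have hfm : Measurable f := hfc.measurable
  have hSm : ∀ t : ℝ, MeasurableSet {y : ℝ | t < f y} :=
    fun t => measurableSet_lt measurable_const hfm
  -- layer cake for P
  have h1 : ∫⁻ y in Set.Ioc 0 ε, ENNReal.ofReal (f y) ∂P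
      = ∫⁻ t in Set.Ioi (0:ℝ), P ({y | t < f y} ∩ Set.Ioc 0 ε) := by
    rw [lintegral_eq_lintegral_meas_lt (P.restrict (Set.Ioc 0 ε))
      (ae_of_all _ fun y => by positivity) hfm.aemeasurable]
    refine lintegral_congr fun t => ?_
    rw [Measure.restrict_apply (hSm t)]
  -- layer cake for volume
  have h2 : ∫⁻ y in Set.Ioc 0 ε, ENNReal.ofReal (f y) ∂volume
      = ∫⁻ t in Set.Ioi (0:ℝ), volume ({y | t < f y} ∩ Set.Ioc 0 ε) := by
    rw [lintegral_eq_lintegral_meas_lt (volume.restrict (Set.Ioc 0 ε))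
      (ae_of_all _ fun y => by positivity) hfm.aemeasurable]
    refine lintegral_congr fun t => ?_
    rw [Measure.restrict_apply (hSm t)]
  -- the volume lintegral equals arctan
  have hint : ∫ y in (0:ℝ)..ε, f y = Real.arctan (ε / a) := by
    have hderiv : ∀ y ∈ Set.uIcc (0:ℝ) ε,
        HasDerivAt (fun z => Real.arctan (z / a)) (f y) y := by
      intro y _
      have h := (Real.hasDerivAt_arctan (y / a)).comp y ((hasDerivAt_id y).div_const a)
      convert h using 1
      case e'_4 => rfl
      case e'_5 => rfl
      case e'_8 => rfl
      rw [hf]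
      field_simp
      ring
    rw [intervalIntegral.integral_eq_sub_of_hasDerivAt hderiv
      (hfc.intervalIntegrable 0 ε)]
    simp
  have h3 : ∫⁻ y in Set.Ioc 0 ε, ENNReal.ofReal (f y) ∂volume
      = ENNReal.ofReal (Real.arctan (ε / a)) := by
    rw [← ofReal_integral_eq_lintegral_ofReal
      ((hfc.integrableOn_Icc (a := 0) (b := ε)).mono_set Set.Ioc_subset_Icc_self)
      (ae_of_all _ fun y => by positivity)]
    rw [← intervalIntegral.integral_of_le hε.le, hint]
  -- pointwise comparison
  have hpt : ∀ t : ℝ, 0 < t →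
      P ({y | t < f y} ∩ Set.Ioc 0 ε)
        ≤ ENNReal.ofReal C * volume ({y | t < f y} ∩ Set.Ioc 0 ε) := by
    intro t ht
    have key : ∀ y : ℝ, (t < f y) ↔ y ^ 2 < a / t - a ^ 2 := by
      intro y
      rw [hf]
      rw [lt_div_iff₀ (by positivity : (0:ℝ) < y ^ 2 + a ^ 2), lt_sub_iff_add_lt,
        lt_div_iff₀ ht]
      constructor <;> intro h <;> nlinarith
    by_cases hr : a / t - a ^ 2 ≤ 0
    · have : {y : ℝ | t < f y} ∩ Set.Ioc 0 ε = ∅ := by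
        ext y
        simp only [Set.mem_inter_iff, Set.mem_setOf_eq, Set.mem_Ioc, Set.mem_empty_iff_false,
          iff_false, not_and, key]
        intro h hy
        exact absurd h (by nlinarith)
      simp [this]
    · push_neg at hr
      set s := Real.sqrt (a / t - a ^ 2) with hs
      have hs0 : 0 < s := Real.sqrt_pos.2 hr
      have key2 : ∀ y : ℝ, 0 < y → ((t < f y) ↔ y < s) := by
        intro y hy
        rw [key]
        constructor
        · intro h
          have := Real.sqrt_lt_sqrt (by positivity) h
          rwa [Real.sqrt_sq hy.le] at this
        · intro h
          have := Real.sq_sqrt hr.le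
          nlinarith
      by_cases hse : ε < s
      · have hset : {y : ℝ | t < f y} ∩ Set.Ioc 0 ε = Set.Ioc 0 ε := by
          ext y
          simp only [Set.mem_inter_iff, Set.mem_setOf_eq, Set.mem_Ioc, and_iff_right_iff_imp]
          rintro ⟨hy1, hy2⟩
          exact (key2 y hy1).2 (lt_of_le_of_lt hy2 hse)
        rw [hset, Real.volume_Ioc, ← ENNReal.ofReal_mul hC0]
        simpa using hfin ε hε
      · push_neg at hse
        have hset : {y : ℝ | t < f y} ∩ Set.Ioc 0 ε = Set.Ioo 0 s := by
          ext y
          simp only [Set.mem_inter_iff, Set.mem_setOf_eq, Set.mem_Ioc, Set.mem_Ioo]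
          constructor
          · rintro ⟨h1, h2, h3⟩
            exact ⟨h2, (key2 y h2).1 h1⟩
          · rintro ⟨h1, h2⟩
            exact ⟨(key2 y h1).2 h2, h1, le_trans h2.le hse⟩
        rw [hset, Real.volume_Ioo, ← ENNReal.ofReal_mul hC0]
        calc P (Set.Ioo 0 s) ≤ P (Set.Ioc 0 s) := measure_mono Set.Ioo_subset_Ioc_self
          _ ≤ ENNReal.ofReal (C * s) := hfin s hs0
          _ = ENNReal.ofReal (C * (s - 0)) := by ring_nf
  calc ∫⁻ y in Set.Ioc 0 ε, ENNReal.ofReal (f y) ∂P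
      = ∫⁻ t in Set.Ioi (0:ℝ), P ({y | t < f y} ∩ Set.Ioc 0 ε) := h1
    _ ≤ ∫⁻ t in Set.Ioi (0:ℝ),
          ENNReal.ofReal C * volume ({y | t < f y} ∩ Set.Ioc 0 ε) := by
        refine lintegral_mono_ae ?_
        rw [ae_restrict_iff' measurableSet_Ioi]
        exact ae_of_all _ fun t ht => hpt t ht
    _ = ENNReal.ofReal C * ∫⁻ t in Set.Ioi (0:ℝ),
          volume ({y | t < f y} ∩ Set.Ioc 0 ε) := by
        rw [lintegral_const_mul' _ _ ENNReal.ofReal_ne_top]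
    _ = ENNReal.ofReal C * ENNReal.ofReal (Real.arctan (ε / a)) := by rw [← h2, h3]
    _ = ENNReal.ofReal (C * Real.arctan (ε / a)) := (ENNReal.ofReal_mul hC0).symm

/-- if `Π((0,y]) ≤ Cy` then
`∫_{(0,ε]} π|x|/(y²+π²x²) Π(dy) ≤ C arctan(ε/(π|x|))`, and consequently for every
`φ ∈ L¹(ℝ)` the integrals `∫ φ(x) ∫_{(0,ε]} πx/(y²+π²x²) Π(dy) dx` tend to 0 as ε → 0⁺. -/
theorem stmt16 (P : Measure ℝ) [IsLocallyFiniteMeasure P] (hP : P (Set.Ioi (0:ℝ))ᶜ = 0)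
    (C : ℝ) (hC : ∀ y : ℝ, 0 < y → (P (Set.Ioc 0 y)).toReal ≤ C * y) :
    (∀ ε : ℝ, 0 < ε → ∀ x : ℝ,
      ∫⁻ y in Set.Ioc 0 ε, ENNReal.ofReal (π * |x| / (y ^ 2 + π ^ 2 * x ^ 2)) ∂P
        ≤ ENNReal.ofReal (C * Real.arctan (ε / (π * |x|)))) ∧
    (∀ φ : ℝ → ℝ, Integrable φ →
      Tendsto (fun ε : ℝ =>
          ∫ x : ℝ, φ x * ∫ y in Set.Ioc 0 ε, π * x / (y ^ 2 + π ^ 2 * x ^ 2) ∂P)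
        (𝓝[>] 0) (𝓝 0)) := by
  have hC0 : 0 ≤ C := by
    have h1 := hC 1 one_pos
    have := ENNReal.toReal_nonneg (a := P (Set.Ioc 0 1))
    linarith
  have part1 : ∀ ε : ℝ, 0 < ε → ∀ x : ℝ,
      ∫⁻ y in Set.Ioc 0 ε, ENNReal.ofReal (π * |x| / (y ^ 2 + π ^ 2 * x ^ 2)) ∂P
        ≤ ENNReal.ofReal (C * Real.arctan (ε / (π * |x|))) := by
    intro ε hε x
    by_cases hx : x = 0
    · simp [hx, Real.pi_ne_zero]
    · have ha : 0 < π * |x| := by positivity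
      have hsq : ∀ y : ℝ, π * |x| / (y ^ 2 + π ^ 2 * x ^ 2)
          = (π * |x|) / (y ^ 2 + (π * |x|) ^ 2) := by
        intro y
        rw [mul_pow, sq_abs]
      simp only [hsq]
      exact aux1 P C (π * |x|) ε ha hε hC
  refine ⟨part1, ?_⟩
  intro φ hφ
  set g : ℝ → ℝ → ℝ := fun ε x => ∫ y in Set.Ioc 0 ε, π * x / (y ^ 2 + π ^ 2 * x ^ 2) ∂P
    with hg
  -- key bound
  have hgb : ∀ ε : ℝ, 0 < ε → ∀ x : ℝ, |g ε x| ≤ C * Real.arctan (ε / (π * |x|)) := by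
    intro ε hε x
    by_cases hx : x = 0
    · simp [hg, hx, Real.pi_ne_zero]
    · have ha : 0 < π * |x| := by positivity
      have hRnn : 0 ≤ C * Real.arctan (ε / (π * |x|)) := by
        have h := Real.arctan_strictMono (div_pos hε ha)
        rw [Real.arctan_zero] at h
        positivity
      have h1 := norm_integral_le_lintegral_norm (μ := P.restrict (Set.Ioc 0 ε))
          (f := fun y => π * x / (y ^ 2 + π ^ 2 * x ^ 2))
      simp only [Real.norm_eq_abs] at h1
      have h2 : ∀ y : ℝ, |π * x / (y ^ 2 + π ^ 2 * x ^ 2)|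
          = π * |x| / (y ^ 2 + π ^ 2 * x ^ 2) := by
        intro y
        rw [abs_div, abs_mul, abs_of_nonneg Real.pi_pos.le,
          abs_of_nonneg (by positivity : (0:ℝ) ≤ y ^ 2 + π ^ 2 * x ^ 2)]
      simp only [h2] at h1
      refine h1.trans ?_
      have := ENNReal.toReal_mono (ENNReal.ofReal_ne_top) (part1 ε hε x)
      rwa [ENNReal.toReal_ofReal hRnn] at this
  have hgb2 : ∀ ε : ℝ, 0 < ε → ∀ x : ℝ, |g ε x| ≤ C * (π / 2) := by
    intro ε hε x
    refine (hgb ε hε x).trans ?_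
    exact mul_le_mul_of_nonneg_left (Real.arctan_lt_pi_div_two _).le hC0
  have hmeas : ∀ ε : ℝ, AEStronglyMeasurable (fun x => φ x * g ε x) volume := by
    intro ε
    refine hφ.aestronglyMeasurable.mul ?_
    have hFm : StronglyMeasurable (fun p : ℝ × ℝ =>
        π * p.1 / (p.2 ^ 2 + π ^ 2 * p.1 ^ 2)) := by
      apply Measurable.stronglyMeasurable
      exact (measurable_const.mul measurable_fst).div
        ((measurable_snd.pow measurable_const).add
          (measurable_const.mul (measurable_fst.pow measurable_const)))
    exact (hFm.integral_prod_right' (ν := P.restrict (Set.Ioc 0 ε))).aestronglyMeasurable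
  have h0 : ∀ᵐ x : ℝ, x ≠ (0:ℝ) := by
    rw [ae_iff]
    simp only [ne_eq, not_not]
    simpa using Real.volume_singleton (a := 0)
  have hzero : (0:ℝ) = ∫ x : ℝ, (0:ℝ) := by simp
  rw [show (𝓝 (0:ℝ)) = 𝓝 (∫ x : ℝ, (0:ℝ)) by rw [← hzero]]
  apply tendsto_integral_filter_of_dominated_convergence
    (bound := fun x => |φ x| * (C * (π / 2)))
  · filter_upwards [self_mem_nhdsWithin] with ε hε
    exact hmeas ε
  · filter_upwards [self_mem_nhdsWithin] with ε hε
    refine ae_of_all _ fun x => ?_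
    rw [Real.norm_eq_abs, abs_mul]
    exact mul_le_mul_of_nonneg_left (hgb2 ε hε x) (abs_nonneg _)
  · exact hφ.abs.mul_const _
  · filter_upwards [h0] with x hx
    have hlim : Tendsto (fun ε : ℝ => |φ x| * (C * Real.arctan (ε / (π * |x|))))
        (𝓝[>] (0:ℝ)) (𝓝 0) := by
      have hc : Continuous (fun ε : ℝ => |φ x| * (C * Real.arctan (ε / (π * |x|)))) :=
        continuous_const.mul (continuous_const.mul
          (Real.continuous_arctan.comp (continuous_id.div_const _)))
      have := (hc.tendsto 0).mono_left (nhdsWithin_le_nhds (s := Set.Ioi (0:ℝ)))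
      simpa using this
    refine squeeze_zero_norm' ?_ hlim
    filter_upwards [self_mem_nhdsWithin] with ε hε
    rw [Real.norm_eq_abs, abs_mul]
    exact mul_le_mul_of_nonneg_left (hgb ε hε x) (abs_nonneg _)
end

section
/- Let Π be a Radon measure on (0,∞) with sup_{y>0} Π((0,y])/y < ∞, and let ℒ_Π(ξ) = ∫_{(0,∞)} e^{−4πy|ξ|} Π(dy) for ξ ≠ 0 (and ℒ_Π(0)=0). Then there exists W^Π ∈ L^∞(ℝ) such that for every u ∈ L¹(ℝ) ∩ L^∞(ℝ) with ∫_ℝ |û(ξ)| ℒ_Π(ξ) dξ < ∞, one has ∫_ℝ u(x) conj(W^Π(x)) dx = ∫_ℝ û(ξ) sgn(ξ) ℒ_Π(ξ) dξ. -/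
open MeasureTheory Set Complex
open scoped Real ENNReal

open Filter
open scoped Topology

lemma measurable_realSign : Measurable Real.sign := by
  have : Real.sign = fun r : ℝ => if r < 0 then (-1:ℝ) else if 0 < r then 1 else 0 :=
    funext fun r => rfl
  rw [this]
  exact Measurable.ite (measurableSet_lt measurable_id measurable_const) measurable_const
    (Measurable.ite (measurableSet_lt measurable_const measurable_id) measurable_const
      measurable_const)

lemma abs_realSign_le (r : ℝ) : |Real.sign r| ≤ 1 := by
  rcases lt_trichotomy r 0 with h | h | h
  · rw [Real.sign_of_neg h]; norm_num
  · rw [h, Real.sign_zero]; norm_num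
  · rw [Real.sign_of_pos h]; norm_num

lemma cexp_int_Ioi (c : ℂ) (hc : 0 < c.re) :
    ∫ ξ : ℝ in Ioi (0:ℝ), Complex.exp (-(c * ξ)) = 1 / c := by
  have hc0 : c ≠ 0 := fun h => by simp [h] at hc
  have hderiv : ∀ ξ ∈ Ioi (0:ℝ),
      HasDerivAt (fun ξ : ℝ => -Complex.exp (-(c * ξ)) / c) (Complex.exp (-(c * ξ))) ξ := by
    intro ξ _
    have h1 : HasDerivAt (fun z : ℂ => -Complex.exp (-(c * z)) / c)
        (Complex.exp (-(c * ξ))) (ξ : ℂ) := by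
      have h2 : HasDerivAt (fun z : ℂ => -Complex.exp (-(c * z)) / c)
          (-(Complex.exp (-(c * (ξ:ℂ))) * -(c * 1)) / c) (ξ : ℂ) :=
        (((((hasDerivAt_id ((ξ:ℝ) : ℂ)).const_mul c).neg).cexp).neg).div_const c
      convert h2 using 1
      field_simp
    exact h1.comp_ofReal
  have hnorm : ∀ ξ : ℝ, ‖Complex.exp (-(c * ξ))‖ = Real.exp (-c.re * ξ) := by
    intro ξ
    rw [Complex.norm_exp]
    congr 1
    simp [Complex.mul_re]
  have hint : IntegrableOn (fun ξ : ℝ => Complex.exp (-(c * ξ))) (Ioi 0) := by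
    apply (exp_neg_integrableOn_Ioi 0 hc).mono'
    · exact (Complex.continuous_exp.comp (by continuity)).aestronglyMeasurable
    · filter_upwards with ξ
      rw [hnorm ξ]
  have htend : Tendsto (fun ξ : ℝ => -Complex.exp (-(c * ξ)) / c) atTop (𝓝 0) := by
    rw [tendsto_zero_iff_norm_tendsto_zero]
    have h3 : Tendsto (fun ξ : ℝ => Real.exp (-c.re * ξ)) atTop (𝓝 0) := by
      have h4 : Tendsto (fun ξ : ℝ => c.re * ξ) atTop atTop :=
        Tendsto.const_mul_atTop hc tendsto_id
      exact (Real.tendsto_exp_neg_atTop_nhds_zero.comp h4).congr fun ξ => by simp [neg_mul]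
    have h5 := h3.div_const ‖c‖
    rw [zero_div] at h5
    apply h5.congr
    intro ξ
    rw [norm_div, norm_neg, hnorm ξ]
  have := integral_Ioi_of_hasDerivAt_of_tendsto
    (by exact ((Complex.continuous_exp.comp (by continuity)).neg.div_const c).continuousWithinAt)
    hderiv hint htend
  rw [this]
  simp only [Complex.ofReal_zero, mul_zero, neg_zero, Complex.exp_zero]
  ring

lemma integrable_exp_neg_abs {a : ℝ} (ha : 0 < a) :
    Integrable (fun ξ : ℝ => Real.exp (-a * |ξ|)) := by
  have h1 : IntegrableOn (fun ξ : ℝ => Real.exp (-a * |ξ|)) (Ioi 0) := by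
    refine (exp_neg_integrableOn_Ioi 0 ha).congr_fun ?_ measurableSet_Ioi
    intro ξ hξ
    simp only [abs_of_pos (mem_Ioi.mp hξ)]
  have h2 : IntegrableOn (fun ξ : ℝ => Real.exp (-a * |ξ|)) (Iio 0) := by
    have h3 : IntegrableOn ((fun ξ : ℝ => Real.exp (-a * |ξ|)) ∘ (fun x : ℝ => -x))
        ((fun x : ℝ => -x) ⁻¹' (Ioi 0)) :=
      (MeasurePreserving.integrableOn_comp_preimage
        (Measure.measurePreserving_neg (volume : Measure ℝ))
        (Homeomorph.neg ℝ).measurableEmbedding).2 h1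
    have h4 : ((fun x : ℝ => -x) ⁻¹' (Ioi 0)) = Iio 0 := by
      ext z; simp
    rw [h4] at h3
    refine h3.congr_fun ?_ measurableSet_Iio
    intro ξ _
    simp [Function.comp, abs_neg]
  have h5 : IntegrableOn (fun ξ : ℝ => Real.exp (-a * |ξ|)) (Ici 0) :=
    h1.congr_set_ae (Ioi_ae_eq_Ici (a := (0:ℝ))).symm
  rw [← integrableOn_univ, ← Iio_union_Ici (a := (0:ℝ))]
  exact h2.union h5
lemma norm_cexp_real_mul_I (r : ℝ) : ‖Complex.exp ((r : ℂ) * Complex.I)‖ = 1 := by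
  rw [Complex.norm_exp]
  simp

lemma fourier_kernel {y : ℝ} (hy : 0 < y) (x : ℝ) :
    (∫ ξ : ℝ, (Real.sign ξ : ℂ) * (Real.exp (-4 * π * y * |ξ|) : ℝ)
        * Complex.exp (-2 * π * x * ξ * Complex.I))
      = -Complex.I * ((x / (π * (x ^ 2 + 4 * y ^ 2)) : ℝ) : ℂ) := by
  set G : ℝ → ℂ := fun ξ => (Real.sign ξ : ℂ) * (Real.exp (-4 * π * y * |ξ|) : ℝ)
        * Complex.exp (-2 * π * x * ξ * Complex.I) with hGdef
  have ha : (0:ℝ) < 4 * π * y := by positivity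
  have hExpI : ∀ ξ : ℝ, ‖Complex.exp (-2 * π * x * ξ * Complex.I)‖ = 1 := by
    intro ξ
    have h : (-2 * (π:ℂ) * x * ξ * Complex.I) = ((-2 * π * x * ξ : ℝ) : ℂ) * Complex.I := by
      push_cast; ring
    rw [h, norm_cexp_real_mul_I]
  have hGm : Measurable G := by
    apply Measurable.mul
    · exact (Complex.measurable_ofReal.comp measurable_realSign).mul
        (Complex.measurable_ofReal.comp
          (Real.measurable_exp.comp (measurable_abs.const_mul (-4 * π * y))))
    · exact Complex.measurable_exp.comp
        ((measurable_const.mul Complex.measurable_ofReal).mul_const Complex.I)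
  have hInt : Integrable G := by
    refine (integrable_exp_neg_abs ha).mono' hGm.aestronglyMeasurable ?_
    filter_upwards with ξ
    rw [hGdef]
    simp only [norm_mul, hExpI ξ, mul_one, Complex.norm_real, Real.norm_eq_abs,
      Real.abs_exp]
    calc |Real.sign ξ| * Real.exp (-4 * π * y * |ξ|)
        ≤ 1 * Real.exp (-4 * π * y * |ξ|) := by
          exact mul_le_mul_of_nonneg_right (abs_realSign_le ξ) (Real.exp_nonneg _)
      _ = Real.exp (-(4 * π * y) * |ξ|) := by rw [one_mul]; ring_nf
  set c₁ : ℂ := (4 * π * y : ℝ) + (2 * π * x : ℝ) * Complex.I with hc₁def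
  set c₂ : ℂ := (4 * π * y : ℝ) - (2 * π * x : ℝ) * Complex.I with hc₂def
  have h₁re : 0 < c₁.re := by rw [hc₁def]; simp; positivity
  have h₂re : 0 < c₂.re := by rw [hc₂def]; simp; positivity
  have hneg : ∀ ξ ∈ Ioi (0:ℝ), G (-ξ) = -Complex.exp (-(c₂ * ξ)) := by
    intro ξ hξ
    have hξ0 : (0:ℝ) < ξ := hξ
    rw [hGdef]
    simp only [Real.sign_of_neg (show -ξ < 0 by linarith), abs_neg, abs_of_pos hξ0,
      Complex.ofReal_neg, Complex.ofReal_one, neg_one_mul, neg_mul, one_mul,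
      Complex.ofReal_exp]
    rw [← Complex.exp_add]
    congr 1
    rw [hc₂def]
    push_cast
    ring
  have hpos : ∀ ξ ∈ Ioi (0:ℝ), G ξ = Complex.exp (-(c₁ * ξ)) := by
    intro ξ hξ
    have hξ0 : (0:ℝ) < ξ := hξ
    rw [hGdef]
    simp only [Real.sign_of_pos hξ0, abs_of_pos hξ0, Complex.ofReal_one, one_mul,
      Complex.ofReal_exp]
    rw [← Complex.exp_add]
    congr 1
    rw [hc₁def]
    push_cast
    ring
  have hIic : ∫ ξ in Iic (0:ℝ), G ξ = ∫ ξ in Ioi (0:ℝ), G (-ξ) := by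
    rw [integral_comp_neg_Ioi]
    norm_num
  have hc₁0 : c₁ ≠ 0 := fun h => by rw [h] at h₁re; simp at h₁re
  have hc₂0 : c₂ ≠ 0 := fun h => by rw [h] at h₂re; simp at h₂re
  calc ∫ ξ : ℝ, G ξ
      = (∫ ξ in Iic (0:ℝ), G ξ) + ∫ ξ in Ioi (0:ℝ), G ξ :=
        (intervalIntegral.integral_Iic_add_Ioi hInt.integrableOn hInt.integrableOn).symm
    _ = (∫ ξ in Ioi (0:ℝ), G (-ξ)) + ∫ ξ in Ioi (0:ℝ), G ξ := by rw [hIic]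
    _ = (∫ ξ in Ioi (0:ℝ), -Complex.exp (-(c₂ * ξ)))
        + ∫ ξ in Ioi (0:ℝ), Complex.exp (-(c₁ * ξ)) := by
        rw [setIntegral_congr_fun measurableSet_Ioi hneg,
          setIntegral_congr_fun measurableSet_Ioi hpos]
    _ = -(1 / c₂) + 1 / c₁ := by
        rw [integral_neg, cexp_int_Ioi _ h₂re, cexp_int_Ioi _ h₁re]
    _ = (c₂ - c₁) / (c₁ * c₂) := by field_simp; ring
    _ = -Complex.I * ((x / (π * (x ^ 2 + 4 * y ^ 2)) : ℝ) : ℂ) := by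
        have h2 : c₁ * c₂ = ((4 * π * (π * (x ^ 2 + 4 * y ^ 2)) : ℝ) : ℂ) := by
          have : c₁ * c₂ = ((4 * π * y : ℝ) : ℂ) ^ 2
              - ((2 * π * x : ℝ) : ℂ) ^ 2 * Complex.I ^ 2 := by
            rw [hc₁def, hc₂def]; ring
          rw [this, Complex.I_sq]
          push_cast
          ring
        have h3 : c₂ - c₁ = ((-4 * π * x : ℝ) : ℂ) * Complex.I := by
          rw [hc₁def, hc₂def]; push_cast; ring
        rw [h2, h3]
        have hd : ((4 * π * (π * (x ^ 2 + 4 * y ^ 2)) : ℝ) : ℂ) ≠ 0 := by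
          rw [Complex.ofReal_ne_zero]
          positivity
        have hd2 : ((π * (x ^ 2 + 4 * y ^ 2) : ℝ) : ℂ) ≠ 0 := by
          rw [Complex.ofReal_ne_zero]
          positivity
        push_cast
        push_cast at hd hd2
        field_simp
lemma carleson_master (P : Measure ℝ) {C : ℝ} (hC1 : 1 ≤ C)
    (hCP : ∀ r : ℝ, 0 < r → P (Ioc 0 r) ≤ ENNReal.ofReal (C * r))
    {f : ℝ → ℝ} (hf : Measurable f) (hnn : ∀ y, 0 ≤ f y)
    (hanti : ∀ ⦃z y : ℝ⦄, 0 < z → z ≤ y → f y ≤ f z) :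
    ∫⁻ y in Ioi 0, ENNReal.ofReal (f y) ∂P
      ≤ ENNReal.ofReal C * ∫⁻ y in Ioi 0, ENNReal.ofReal (f y) := by
  rw [lintegral_eq_lintegral_meas_lt _ (ae_of_all _ hnn) hf.aemeasurable,
    lintegral_eq_lintegral_meas_lt _ (ae_of_all _ hnn) hf.aemeasurable,
    ← lintegral_const_mul' _ _ ENNReal.ofReal_ne_top]
  refine lintegral_mono fun t => ?_
  rw [Measure.restrict_apply (measurableSet_lt measurable_const hf),
    Measure.restrict_apply (measurableSet_lt measurable_const hf)]
  set S := {a : ℝ | t < f a} ∩ Ioi 0 with hSdef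
  have hdown : ∀ y ∈ S, ∀ z : ℝ, 0 < z → z ≤ y → z ∈ S := by
    intro y hy z hz0 hzy
    exact ⟨lt_of_lt_of_le hy.1 (hanti hz0 hzy), hz0⟩
  rcases S.eq_empty_or_nonempty with hS | ⟨y0, hy0⟩
  · rw [hS]; simp
  by_cases hbd : BddAbove S
  · set r := sSup S with hrdef
    have hy0' : (0:ℝ) < y0 := hy0.2
    have hr : 0 < r := lt_of_lt_of_le hy0' (le_csSup hbd hy0)
    have hSsub : S ⊆ Ioc 0 r := fun z hz => ⟨hz.2, le_csSup hbd hz⟩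
    have hsub2 : Ioo 0 r ⊆ S := by
      intro z hz
      obtain ⟨w, hwS, hzw⟩ := exists_lt_of_lt_csSup ⟨y0, hy0⟩ hz.2
      exact hdown w hwS z hz.1 hzw.le
    calc P S ≤ P (Ioc 0 r) := measure_mono hSsub
      _ ≤ ENNReal.ofReal (C * r) := hCP r hr
      _ = ENNReal.ofReal C * ENNReal.ofReal r := ENNReal.ofReal_mul (by linarith)
      _ ≤ ENNReal.ofReal C * volume S := by
          gcongr
          have : volume (Ioo (0:ℝ) r) = ENNReal.ofReal r := by
            rw [Real.volume_Ioo, sub_zero]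
          rw [← this]
          exact measure_mono hsub2
  · have hsub3 : Ioi (0:ℝ) ⊆ S := by
      intro z hz
      obtain ⟨w, hwS, hzw⟩ := not_bddAbove_iff.mp hbd z
      exact hdown w hwS z hz hzw.le
    have hvol : volume S = ⊤ := by
      rw [eq_top_iff, ← Real.volume_Ioi (a := 0)]
      exact measure_mono hsub3
    rw [hvol, ENNReal.mul_top (by simp; linarith)]
    exact le_top
lemma exp_lint_finite {a : ℝ} (ha : 0 < a) :
    ∫⁻ y in Ioi (0:ℝ), ENNReal.ofReal (Real.exp (-a * y)) < ⊤ := by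
  have hint : IntegrableOn (fun y => Real.exp (-a * y)) (Ioi (0:ℝ)) :=
    exp_neg_integrableOn_Ioi 0 ha
  rw [← ofReal_integral_eq_lintegral_ofReal hint (ae_of_all _ fun y => Real.exp_nonneg _)]
  exact ENNReal.ofReal_lt_top

lemma kernel_lebesgue (x : ℝ) :
    ∫⁻ y in Ioi (0:ℝ), ENNReal.ofReal (|x| / (π * (x ^ 2 + 4 * y ^ 2)))
      ≤ ENNReal.ofReal (1 / 4) := by
  by_cases hx : x = 0
  · subst hx
    simp
  have hx' : (0:ℝ) < |x| := abs_pos.mpr hx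
  have hπ : (π:ℝ) ≠ 0 := Real.pi_ne_zero
  set g : ℝ → ℝ := fun y => 1 / (2 * π) * Real.arctan (2 * y / |x|) with hgdef
  have hderiv : ∀ y : ℝ, HasDerivAt g (|x| / (π * (x ^ 2 + 4 * y ^ 2))) y := by
    intro y
    have h1 : HasDerivAt (fun y : ℝ => 2 * y / |x|) (2 / |x|) y := by
      simpa using ((hasDerivAt_id y).const_mul (2:ℝ)).div_const |x|
    have h2 := (Real.hasDerivAt_arctan (2 * y / |x|)).comp y h1
    have h3 : HasDerivAt g (1 / (2 * π) * (1 / (1 + (2 * y / |x|) ^ 2) * (2 / |x|))) y :=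
      h2.const_mul (1 / (2 * π))
    convert h3 using 1
    have hden : (0:ℝ) < x ^ 2 + 4 * y ^ 2 := by positivity
    field_simp
    rw [sq_abs]
    ring
  have hnn : ∀ y ∈ Ioi (0:ℝ), 0 ≤ |x| / (π * (x ^ 2 + 4 * y ^ 2)) := by
    intro y _; positivity
  have htend : Tendsto g atTop (𝓝 (1 / (2 * π) * (π / 2))) := by
    apply Tendsto.const_mul
    exact (tendsto_nhds_of_tendsto_nhdsWithin Real.tendsto_arctan_atTop).comp
      ((tendsto_id.const_mul_atTop two_pos).atTop_div_const hx')
  have hcont : ContinuousWithinAt g (Ici 0) 0 := by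
    apply Continuous.continuousWithinAt
    exact continuous_const.mul (Real.continuous_arctan.comp
      ((continuous_const.mul continuous_id).div_const |x|))
  have hval := integral_Ioi_of_hasDerivAt_of_nonneg hcont (fun y _ => hderiv y) hnn htend
  have hint := integrableOn_Ioi_deriv_of_nonneg hcont (fun y _ => hderiv y) hnn htend
  rw [← ofReal_integral_eq_lintegral_ofReal hint
    (ae_of_all _ fun y => by positivity)]
  have hg0 : g 0 = 0 := by rw [hgdef]; simp
  rw [hval, hg0, sub_zero]
  apply ENNReal.ofReal_le_ofReal
  rw [show (1 / (2 * π) * (π / 2) : ℝ) = 1 / 4 from by field_simp; ring]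

lemma norm_cexp_phase (x ξ : ℝ) : ‖Complex.exp (-2 * π * x * ξ * Complex.I)‖ = 1 := by
  have h : (-2 * (π:ℂ) * x * ξ * Complex.I) = ((-2 * π * x * ξ : ℝ) : ℂ) * Complex.I := by
    push_cast; ring
  rw [h, Complex.norm_exp]
  simp

/-- The Fourier transform `û(ξ) = ∫ u(x) e^{-2πixξ} dx`. -/
noncomputable def fourierT (u : ℝ → ℂ) (ξ : ℝ) : ℂ :=
  ∫ x : ℝ, u x * Complex.exp (-2 * π * x * ξ * Complex.I)

/-- `ℒ_Π(ξ) = ∫ e^{-4πy|ξ|} Π(dy)` for `ξ ≠ 0`, and `ℒ_Π(0) = 0`. -/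
noncomputable def LPi (P : Measure ℝ) (ξ : ℝ) : ℝ :=
  if ξ = 0 then 0 else (∫⁻ y, ENNReal.ofReal (Real.exp (-4 * π * y * |ξ|)) ∂P).toReal

/-- there is `W^Π ∈ L^∞(ℝ)` with (distributional) Fourier transform
`sgn(ξ) ℒ_Π(ξ)`: for all `u ∈ L¹ ∩ L^∞` with `∫ |û| ℒ_Π < ∞`,
`∫ u conj(W^Π) = ∫ û(ξ) sgn(ξ) ℒ_Π(ξ) dξ`. -/
theorem stmt17 (P : Measure ℝ) [IsLocallyFiniteMeasure P] (hP : P (Set.Ioi (0:ℝ))ᶜ = 0)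
    (hCarl : ∃ C : ℝ, ∀ y : ℝ, 0 < y → (P (Set.Ioc 0 y)).toReal ≤ C * y) :
    ∃ (W : ℝ → ℂ) (B : ℝ), Measurable W ∧ (∀ x : ℝ, ‖W x‖ ≤ B) ∧
      ∀ u : ℝ → ℂ, Integrable u → (∃ M : ℝ, ∀ x : ℝ, ‖u x‖ ≤ M) →
        Integrable (fun ξ => ‖fourierT u ξ‖ * LPi P ξ) →
        ∫ x : ℝ, u x * (starRingEnd ℂ) (W x)
          = ∫ ξ : ℝ, fourierT u ξ * (Real.sign ξ : ℂ) * (LPi P ξ : ℂ) := by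
  obtain ⟨C₀, hC₀⟩ := hCarl
  set C : ℝ := max C₀ 1 with hCdef
  have hC1 : (1:ℝ) ≤ C := le_max_right _ _
  have hC0 : (0:ℝ) ≤ C := by linarith
  have hCP : ∀ r : ℝ, 0 < r → P (Ioc 0 r) ≤ ENNReal.ofReal (C * r) := by
    intro r hr
    have hfin : P (Ioc 0 r) ≠ ⊤ :=
      ne_of_lt (lt_of_le_of_lt (measure_mono Ioc_subset_Icc_self)
        (isCompact_Icc.measure_lt_top))
    calc P (Ioc 0 r) = ENNReal.ofReal ((P (Ioc 0 r)).toReal) :=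
          (ENNReal.ofReal_toReal hfin).symm
      _ ≤ ENNReal.ofReal (C * r) := by
          apply ENNReal.ofReal_le_ofReal
          refine le_trans (hC₀ r hr) ?_
          have := le_max_left C₀ 1
          nlinarith
  have hres : P.restrict (Ioi 0) = P := by
    apply Measure.restrict_eq_self_of_ae_mem
    exact ae_iff.mpr hP
  -- kernel lintegral bound over P
  have hKlint : ∀ x : ℝ, ∫⁻ y, ENNReal.ofReal (|x| / (π * (x ^ 2 + 4 * y ^ 2))) ∂P
      ≤ ENNReal.ofReal (C / 4) := by
    intro x
    have hm : Measurable fun y : ℝ => |x| / (π * (x ^ 2 + 4 * y ^ 2)) :=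
      measurable_const.div (measurable_const.mul
        (measurable_const.add ((measurable_id.pow_const 2).const_mul 4)))
    have hanti : ∀ ⦃z y : ℝ⦄, 0 < z → z ≤ y →
        |x| / (π * (x ^ 2 + 4 * y ^ 2)) ≤ |x| / (π * (x ^ 2 + 4 * z ^ 2)) := by
      intro z y hz hzy
      gcongr
    calc ∫⁻ y, ENNReal.ofReal (|x| / (π * (x ^ 2 + 4 * y ^ 2))) ∂P
        = ∫⁻ y in Ioi 0, ENNReal.ofReal (|x| / (π * (x ^ 2 + 4 * y ^ 2))) ∂P := by
          rw [hres]
      _ ≤ ENNReal.ofReal C * ∫⁻ y in Ioi 0, ENNReal.ofReal (|x| / (π * (x ^ 2 + 4 * y ^ 2))) :=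
          carleson_master P hC1 hCP hm (fun y => by positivity) hanti
      _ ≤ ENNReal.ofReal C * ENNReal.ofReal (1 / 4) := by
          gcongr
          exact kernel_lebesgue x
      _ = ENNReal.ofReal (C / 4) := by
          rw [← ENNReal.ofReal_mul hC0, mul_one_div]
  have hKm : ∀ x : ℝ, Measurable (fun y : ℝ => x / (π * (x ^ 2 + 4 * y ^ 2))) := fun x =>
    measurable_const.div (measurable_const.mul
      (measurable_const.add ((measurable_id.pow_const 2).const_mul 4)))
  have habsK : ∀ x y : ℝ, ‖x / (π * (x ^ 2 + 4 * y ^ 2))‖ = |x| / (π * (x ^ 2 + 4 * y ^ 2)) := by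
    intro x y
    rw [Real.norm_eq_abs, abs_div, _root_.abs_of_nonneg (by positivity : (0:ℝ) ≤ π * (x ^ 2 + 4 * y ^ 2))]
  have hKint : ∀ x : ℝ, Integrable (fun y : ℝ => x / (π * (x ^ 2 + 4 * y ^ 2))) P := by
    intro x
    refine ⟨(hKm x).aestronglyMeasurable, ?_⟩
    have h1 : ∫⁻ y, ‖x / (π * (x ^ 2 + 4 * y ^ 2))‖ₑ ∂P
        = ∫⁻ y, ENNReal.ofReal (|x| / (π * (x ^ 2 + 4 * y ^ 2))) ∂P :=
      lintegral_congr fun y => by rw [← ofReal_norm_eq_enorm, habsK]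
    rw [HasFiniteIntegral, h1]
    exact lt_of_le_of_lt (hKlint x) ENNReal.ofReal_lt_top
  have hKbound : ∀ x : ℝ, |∫ y, x / (π * (x ^ 2 + 4 * y ^ 2)) ∂P| ≤ C / 4 := by
    intro x
    have h1 := norm_integral_le_lintegral_norm (μ := P)
      (fun y : ℝ => x / (π * (x ^ 2 + 4 * y ^ 2)))
    rw [Real.norm_eq_abs] at h1
    refine le_trans h1 (ENNReal.toReal_le_of_le_ofReal (by positivity) ?_)
    refine le_trans (le_of_eq (lintegral_congr fun y => by rw [habsK])) (hKlint x)
  refine ⟨fun x => Complex.I * ((∫ y, x / (π * (x ^ 2 + 4 * y ^ 2)) ∂P : ℝ) : ℂ), C / 4,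
    ?_, ?_, ?_⟩
  · apply measurable_const.mul
    apply Complex.measurable_ofReal.comp
    have h2 : StronglyMeasurable fun p : ℝ × ℝ => p.1 / (π * (p.1 ^ 2 + 4 * p.2 ^ 2)) :=
      (measurable_fst.div (measurable_const.mul
        ((measurable_fst.pow_const 2).add ((measurable_snd.pow_const 2).const_mul 4)))).stronglyMeasurable
    exact h2.integral_prod_right'.measurable
  · intro x
    rw [norm_mul, Complex.norm_I, one_mul, Complex.norm_real, Real.norm_eq_abs]
    exact hKbound x
  · intro u hu hMbd hFL
    obtain ⟨M, hM⟩ := hMbd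
    have hu_aesm := hu.1
    have h_ae0 : ∀ᵐ ξ : ℝ, ξ ≠ (0:ℝ) := by
      refine ae_iff.mpr ?_
      have h0 : {a : ℝ | ¬a ≠ 0} = {(0:ℝ)} := by ext a; simp
      rw [h0]
      exact measure_singleton 0
    have haeP : ∀ᵐ y ∂P, (0:ℝ) < y := by
      refine ae_iff.mpr ?_
      have h0 : {a : ℝ | ¬(0:ℝ) < a} = (Ioi (0:ℝ))ᶜ := by ext a; simp
      rw [h0]
      exact hP
    have hem : ∀ ξ : ℝ, Measurable fun y : ℝ => Real.exp (-4 * π * y * |ξ|) := fun ξ =>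
      Real.measurable_exp.comp ((measurable_id.const_mul (-4 * π)).mul_const |ξ|)
    have hexpLfin : ∀ ξ : ℝ, ξ ≠ 0 →
        ∫⁻ y, ENNReal.ofReal (Real.exp (-4 * π * y * |ξ|)) ∂P < ⊤ := by
      intro ξ hξ
      have habs : (0:ℝ) < |ξ| := abs_pos.mpr hξ
      have hpos : (0:ℝ) < 4 * π * |ξ| := by positivity
      have hanti : ∀ ⦃z y : ℝ⦄, 0 < z → z ≤ y →
          Real.exp (-4 * π * y * |ξ|) ≤ Real.exp (-4 * π * z * |ξ|) := by
        intro z y hz hzy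
        apply Real.exp_le_exp.mpr
        nlinarith [abs_nonneg ξ, Real.pi_pos]
      have h2 : ∫⁻ y in Ioi (0:ℝ), ENNReal.ofReal (Real.exp (-4 * π * y * |ξ|))
          = ∫⁻ y in Ioi (0:ℝ), ENNReal.ofReal (Real.exp (-(4 * π * |ξ|) * y)) :=
        lintegral_congr fun y => by rw [show -4 * π * y * |ξ| = -(4 * π * |ξ|) * y from by ring]
      calc ∫⁻ y, ENNReal.ofReal (Real.exp (-4 * π * y * |ξ|)) ∂P
          = ∫⁻ y in Ioi 0, ENNReal.ofReal (Real.exp (-4 * π * y * |ξ|)) ∂P := by rw [hres]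
        _ ≤ ENNReal.ofReal C * ∫⁻ y in Ioi 0, ENNReal.ofReal (Real.exp (-4 * π * y * |ξ|)) :=
            carleson_master P hC1 hCP (hem ξ) (fun y => Real.exp_nonneg _) hanti
        _ < ⊤ := by
            rw [h2]
            exact ENNReal.mul_lt_top ENNReal.ofReal_lt_top (exp_lint_finite hpos)
    have hexpPint : ∀ ξ : ℝ, ξ ≠ 0 →
        Integrable (fun y : ℝ => Real.exp (-4 * π * y * |ξ|)) P := by
      intro ξ hξ
      refine ⟨(hem ξ).aestronglyMeasurable, ?_⟩
      rw [HasFiniteIntegral]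
      have h1 : ∫⁻ y, ‖Real.exp (-4 * π * y * |ξ|)‖ₑ ∂P
          = ∫⁻ y, ENNReal.ofReal (Real.exp (-4 * π * y * |ξ|)) ∂P :=
        lintegral_congr fun y => by
          rw [← ofReal_norm_eq_enorm, Real.norm_eq_abs, Real.abs_exp]
      rw [h1]
      exact hexpLfin ξ hξ
    have hLrepr : ∀ ξ : ℝ, ξ ≠ 0 → LPi P ξ = ∫ y, Real.exp (-4 * π * y * |ξ|) ∂P := by
      intro ξ hξ
      rw [LPi, if_neg hξ, integral_eq_lintegral_of_nonneg_ae
        (ae_of_all _ fun y => Real.exp_nonneg _) (hem ξ).aestronglyMeasurable]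
    have hmabs : ∀ x : ℝ, Measurable fun y : ℝ => |x| / (π * (x ^ 2 + 4 * y ^ 2)) := fun x =>
      measurable_const.div (measurable_const.mul
        (measurable_const.add ((measurable_id.pow_const 2).const_mul 4)))
    have hKpm : Measurable fun p : ℝ × ℝ => p.1 / (π * (p.1 ^ 2 + 4 * p.2 ^ 2)) :=
      measurable_fst.div (measurable_const.mul
        ((measurable_fst.pow_const 2).add ((measurable_snd.pow_const 2).const_mul 4)))
    have hF_aesm : AEStronglyMeasurable
        (fun p : ℝ × ℝ => -Complex.I * u p.1 * ((p.1 / (π * (p.1 ^ 2 + 4 * p.2 ^ 2)) : ℝ) : ℂ))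
        (volume.prod P) :=
      (aestronglyMeasurable_const.mul hu_aesm.comp_fst).mul
        (Complex.measurable_ofReal.comp hKpm).aestronglyMeasurable
    have hnormF : ∀ x y : ℝ, ‖-Complex.I * u x * ((x / (π * (x ^ 2 + 4 * y ^ 2)) : ℝ) : ℂ)‖
        = ‖u x‖ * (|x| / (π * (x ^ 2 + 4 * y ^ 2))) := by
      intro x y
      rw [norm_mul, norm_mul, norm_neg, Complex.norm_I, one_mul, Complex.norm_real, habsK]
    have hKabs_le : ∀ x : ℝ, ∫ y, |x| / (π * (x ^ 2 + 4 * y ^ 2)) ∂P ≤ C / 4 := by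
      intro x
      rw [integral_eq_lintegral_of_nonneg_ae (ae_of_all _ fun y => by positivity)
        (hmabs x).aestronglyMeasurable]
      exact ENNReal.toReal_le_of_le_ofReal (by positivity) (hKlint x)
    have hFint : Integrable
        (fun p : ℝ × ℝ => -Complex.I * u p.1 * ((p.1 / (π * (p.1 ^ 2 + 4 * p.2 ^ 2)) : ℝ) : ℂ))
        (volume.prod P) := by
      rw [integrable_prod_iff hF_aesm]
      constructor
      · filter_upwards with x
        exact ((hKint x).ofReal (𝕜 := ℂ)).const_mul (-Complex.I * u x)
      · have heq : ∀ x : ℝ,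
            (∫ y, ‖-Complex.I * u x * ((x / (π * (x ^ 2 + 4 * y ^ 2)) : ℝ) : ℂ)‖ ∂P)
              = ‖u x‖ * ∫ y, |x| / (π * (x ^ 2 + 4 * y ^ 2)) ∂P := by
          intro x
          simp_rw [hnormF]
          rw [integral_const_mul]
        refine (hu.norm.mul_const (C / 4)).mono' hF_aesm.norm.integral_prod_right' ?_
        filter_upwards with x
        rw [Real.norm_eq_abs, _root_.abs_of_nonneg (integral_nonneg fun y => norm_nonneg _),
          heq x]
        exact mul_le_mul_of_nonneg_left (hKabs_le x) (norm_nonneg _)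
    have hW_eq : ∀ x : ℝ, u x * (starRingEnd ℂ)
          (Complex.I * ((∫ y, x / (π * (x ^ 2 + 4 * y ^ 2)) ∂P : ℝ) : ℂ))
        = ∫ y, -Complex.I * u x * ((x / (π * (x ^ 2 + 4 * y ^ 2)) : ℝ) : ℂ) ∂P := by
      intro x
      rw [integral_const_mul, show (∫ y, ((x / (π * (x ^ 2 + 4 * y ^ 2)) : ℝ) : ℂ) ∂P)
          = ((∫ y, x / (π * (x ^ 2 + 4 * y ^ 2)) ∂P : ℝ) : ℂ) from integral_ofReal]
      simp only [map_mul, Complex.conj_I, Complex.conj_ofReal]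
      ring
    have hclaim : ∀ y : ℝ, 0 < y →
        (∫ x : ℝ, -Complex.I * u x * ((x / (π * (x ^ 2 + 4 * y ^ 2)) : ℝ) : ℂ))
          = ∫ ξ : ℝ, fourierT u ξ * (Real.sign ξ : ℂ)
              * ((Real.exp (-4 * π * y * |ξ|) : ℝ) : ℂ) := by
      intro y hy
      have hphase : Measurable fun p : ℝ × ℝ =>
          Complex.exp (-2 * π * p.2 * p.1 * Complex.I) :=
        Complex.measurable_exp.comp (((measurable_const.mul
          (Complex.measurable_ofReal.comp measurable_snd)).mul
          (Complex.measurable_ofReal.comp measurable_fst)).mul_const Complex.I)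
      have hG2_aesm : AEStronglyMeasurable (fun p : ℝ × ℝ =>
          u p.2 * Complex.exp (-2 * π * p.2 * p.1 * Complex.I) * (Real.sign p.1 : ℂ)
            * ((Real.exp (-4 * π * y * |p.1|) : ℝ) : ℂ)) (volume.prod volume) :=
        ((hu_aesm.comp_snd.mul hphase.aestronglyMeasurable).mul
          (Complex.measurable_ofReal.comp
            (measurable_realSign.comp measurable_fst)).aestronglyMeasurable).mul
          (Complex.measurable_ofReal.comp (Real.measurable_exp.comp
            ((measurable_abs.comp measurable_fst).const_mul
              (-4 * π * y)))).aestronglyMeasurable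
      have hG2int : Integrable (fun p : ℝ × ℝ =>
          u p.2 * Complex.exp (-2 * π * p.2 * p.1 * Complex.I) * (Real.sign p.1 : ℂ)
            * ((Real.exp (-4 * π * y * |p.1|) : ℝ) : ℂ)) (volume.prod volume) := by
        have hbd : Integrable (fun p : ℝ × ℝ => Real.exp (-(4 * π * y) * |p.1|) * ‖u p.2‖)
            (volume.prod volume) :=
          (integrable_exp_neg_abs (by positivity)).mul_prod hu.norm
        refine hbd.mono' hG2_aesm ?_
        filter_upwards with p
        rw [norm_mul, norm_mul, norm_mul, norm_cexp_phase p.2 p.1, Complex.norm_real,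
          Complex.norm_real, Real.norm_eq_abs, Real.norm_eq_abs, Real.abs_exp,
          show -4 * π * y * |p.1| = -(4 * π * y) * |p.1| from by ring]
        have h4 : ‖u p.2‖ * 1 * |Real.sign p.1| * Real.exp (-(4 * π * y) * |p.1|)
            ≤ ‖u p.2‖ * 1 * 1 * Real.exp (-(4 * π * y) * |p.1|) := by
          gcongr
          · exact abs_realSign_le p.1
        exact le_trans h4 (le_of_eq (by ring))
      have hstep : ∀ ξ : ℝ, fourierT u ξ * (Real.sign ξ : ℂ)
            * ((Real.exp (-4 * π * y * |ξ|) : ℝ) : ℂ)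
          = ∫ x : ℝ, u x * Complex.exp (-2 * π * x * ξ * Complex.I) * (Real.sign ξ : ℂ)
              * ((Real.exp (-4 * π * y * |ξ|) : ℝ) : ℂ) := by
        intro ξ
        rw [fourierT, integral_mul_const, integral_mul_const]
      have hinner : ∀ x : ℝ,
          (∫ ξ : ℝ, u x * Complex.exp (-2 * π * x * ξ * Complex.I) * (Real.sign ξ : ℂ)
              * ((Real.exp (-4 * π * y * |ξ|) : ℝ) : ℂ))
            = u x * (-Complex.I * ((x / (π * (x ^ 2 + 4 * y ^ 2)) : ℝ) : ℂ)) := by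
        intro x
        rw [show (fun ξ : ℝ => u x * Complex.exp (-2 * π * x * ξ * Complex.I)
              * (Real.sign ξ : ℂ) * ((Real.exp (-4 * π * y * |ξ|) : ℝ) : ℂ))
            = fun ξ : ℝ => u x * ((Real.sign ξ : ℂ) * ((Real.exp (-4 * π * y * |ξ|) : ℝ) : ℂ)
              * Complex.exp (-2 * π * x * ξ * Complex.I)) from funext fun ξ => by ring]
        rw [integral_const_mul, fourier_kernel hy x]
      calc (∫ x : ℝ, -Complex.I * u x * ((x / (π * (x ^ 2 + 4 * y ^ 2)) : ℝ) : ℂ))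
          = ∫ x : ℝ, u x * (-Complex.I * ((x / (π * (x ^ 2 + 4 * y ^ 2)) : ℝ) : ℂ)) :=
            integral_congr_ae (ae_of_all _ fun x => by ring)
        _ = ∫ x : ℝ, ∫ ξ : ℝ, u x * Complex.exp (-2 * π * x * ξ * Complex.I) * (Real.sign ξ : ℂ)
              * ((Real.exp (-4 * π * y * |ξ|) : ℝ) : ℂ) := by
            simp_rw [hinner]
        _ = ∫ ξ : ℝ, ∫ x : ℝ, u x * Complex.exp (-2 * π * x * ξ * Complex.I) * (Real.sign ξ : ℂ)
              * ((Real.exp (-4 * π * y * |ξ|) : ℝ) : ℂ) := by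
            have := integral_integral_swap (f := fun (ξ x : ℝ) =>
              u x * Complex.exp (-2 * π * x * ξ * Complex.I) * (Real.sign ξ : ℂ)
                * ((Real.exp (-4 * π * y * |ξ|) : ℝ) : ℂ)) hG2int
            exact this.symm
        _ = ∫ ξ : ℝ, fourierT u ξ * (Real.sign ξ : ℂ)
              * ((Real.exp (-4 * π * y * |ξ|) : ℝ) : ℂ) := by
            simp_rw [← hstep]
    -- Fubini 2 integrability
    have hphase2 : Measurable fun p : ℝ × ℝ =>
        Complex.exp (-2 * π * p.2 * p.1 * Complex.I) :=
      Complex.measurable_exp.comp (((measurable_const.mul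
        (Complex.measurable_ofReal.comp measurable_snd)).mul
        (Complex.measurable_ofReal.comp measurable_fst)).mul_const Complex.I)
    have hfour_aesm : AEStronglyMeasurable (fourierT u) volume := by
      have h0 : AEStronglyMeasurable
          (fun p : ℝ × ℝ => u p.2 * Complex.exp (-2 * π * p.2 * p.1 * Complex.I))
          (volume.prod volume) := hu_aesm.comp_snd.mul hphase2.aestronglyMeasurable
      exact h0.integral_prod_right'
    have hHaesm : AEStronglyMeasurable (fun p : ℝ × ℝ =>
        fourierT u p.1 * (Real.sign p.1 : ℂ) * ((Real.exp (-4 * π * p.2 * |p.1|) : ℝ) : ℂ))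
        (volume.prod P) :=
      ((hfour_aesm.comp_fst).mul (Complex.measurable_ofReal.comp
        (measurable_realSign.comp measurable_fst)).aestronglyMeasurable).mul
        (Complex.measurable_ofReal.comp (Real.measurable_exp.comp
          (((measurable_snd.const_mul (-4 * π))).mul
            (measurable_abs.comp measurable_fst)))).aestronglyMeasurable
    have habs1 : ∀ ξ : ℝ, ξ ≠ 0 → |Real.sign ξ| = 1 := by
      intro ξ hξ
      rcases hξ.lt_or_gt with h | h
      · rw [Real.sign_of_neg h]; norm_num
      · rw [Real.sign_of_pos h]; norm_num
    have hHint : Integrable (fun p : ℝ × ℝ =>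
        fourierT u p.1 * (Real.sign p.1 : ℂ) * ((Real.exp (-4 * π * p.2 * |p.1|) : ℝ) : ℂ))
        (volume.prod P) := by
      rw [integrable_prod_iff hHaesm]
      constructor
      · filter_upwards [h_ae0] with ξ hξ
        exact ((hexpPint ξ hξ).ofReal (𝕜 := ℂ)).const_mul
          (fourierT u ξ * (Real.sign ξ : ℂ))
      · refine hFL.congr ?_
        filter_upwards [h_ae0] with ξ hξ
        have h1 : ∀ y : ℝ, ‖fourierT u ξ * (Real.sign ξ : ℂ)
              * ((Real.exp (-4 * π * y * |ξ|) : ℝ) : ℂ)‖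
            = ‖fourierT u ξ‖ * |Real.sign ξ| * Real.exp (-4 * π * y * |ξ|) := by
          intro y
          rw [norm_mul, norm_mul, Complex.norm_real, Complex.norm_real, Real.norm_eq_abs,
            Real.norm_eq_abs, Real.abs_exp]
        simp_rw [h1, habs1 ξ hξ, mul_one]
        rw [integral_const_mul, ← hLrepr ξ hξ]
    have hswap2 := integral_integral_swap (f := fun (ξ y : ℝ) =>
      fourierT u ξ * (Real.sign ξ : ℂ) * ((Real.exp (-4 * π * y * |ξ|) : ℝ) : ℂ)) hHint
    calc ∫ x : ℝ, u x * (starRingEnd ℂ)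
          (Complex.I * ((∫ y, x / (π * (x ^ 2 + 4 * y ^ 2)) ∂P : ℝ) : ℂ))
        = ∫ x : ℝ, ∫ y, -Complex.I * u x * ((x / (π * (x ^ 2 + 4 * y ^ 2)) : ℝ) : ℂ) ∂P := by
          simp_rw [hW_eq]
      _ = ∫ y, (∫ x : ℝ, -Complex.I * u x
            * ((x / (π * (x ^ 2 + 4 * y ^ 2)) : ℝ) : ℂ)) ∂P :=
          integral_integral_swap (f := fun (x y : ℝ) =>
            -Complex.I * u x * ((x / (π * (x ^ 2 + 4 * y ^ 2)) : ℝ) : ℂ)) hFint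
      _ = ∫ y, (∫ ξ : ℝ, fourierT u ξ * (Real.sign ξ : ℂ)
            * ((Real.exp (-4 * π * y * |ξ|) : ℝ) : ℂ)) ∂P := by
          refine integral_congr_ae ?_
          filter_upwards [haeP] with y hy
          exact hclaim y hy
      _ = ∫ ξ : ℝ, ∫ y, fourierT u ξ * (Real.sign ξ : ℂ)
            * ((Real.exp (-4 * π * y * |ξ|) : ℝ) : ℂ) ∂P := hswap2.symm
      _ = ∫ ξ : ℝ, fourierT u ξ * (Real.sign ξ : ℂ) * (LPi P ξ : ℂ) := by
          refine integral_congr_ae ?_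
          filter_upwards [h_ae0] with ξ hξ
          rw [integral_const_mul, show (∫ y, ((Real.exp (-4 * π * y * |ξ|) : ℝ) : ℂ) ∂P)
              = ((∫ y, Real.exp (-4 * π * y * |ξ|) ∂P : ℝ) : ℂ) from integral_ofReal,
            ← hLrepr ξ hξ]
end
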